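/- arXiv:2404.07881 — 3 statements merged into one kernel-verified Lean document; each statement's English description precedes it below -/
import Mathlib

section
/- Let x, y be diagram expressions all of whose terms have combinatorial order at most 1 (i.e. each term is combinatorially negligible or of combinatorial order 1). If x ≐ y, then A·x ≐ A·y. Moreover, if x₁,…,x_t, y₁,…,y_t are diagram expressions, each with all terms of combinatorial order at most 1, satisfying x_i ≐ y_i for all i ∈ [t], then f(x₁,…,x_t) ≐ f(y₁,…,y_t) for every polynomial f : ℝ^t → ℝ independent of n applied componentwise, where both sides are expanded in the diagram basis by the stated operation rules. -/
set_option linter.unusedVariables false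

open scoped Classical BigOperators

noncomputable section

/-! ### Fourier diagrams

A Fourier diagram is a finite rooted multigraph, possibly carrying additional
"2-labeled" edges (`edges2`).  A plain (unlabeled) Fourier diagram is one with
`edges2 = 0`. -/

structure Diagram where
  V : Type
  fintypeV : Fintype V
  decEqV : DecidableEq V
  root : V
  edges : Multiset (Sym2 V)
  edges2 : Multiset (Sym2 V)

attribute [instance] Diagram.fintypeV Diagram.decEqV

/-- Symmetrized evaluation of a matrix entry on an unordered pair (agrees with
`A (φ a) (φ b)` whenever `A` is symmetric). -/
def sym2val {V : Type} {N : ℕ} (A : Matrix (Fin N) (Fin N) ℝ) (φ : V → Fin N) : Sym2 V → ℝ :=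
  Sym2.lift ⟨fun a b => (A (φ a) (φ b) + A (φ b) (φ a)) / 2, fun a b => by ring⟩

/-- Entry `i` of the vector `Z_α`: the sum over injective embeddings `φ` of the
vertices with `φ(root) = i` of the product of matrix entries over the edges
(a 2-labeled edge contributes `A² - 1/N`). -/
def Zv {N : ℕ} (A : Matrix (Fin N) (Fin N) ℝ) (α : Diagram) (i : Fin N) : ℝ :=
  ∑ φ : α.V → Fin N,
    if Function.Injective φ ∧ φ α.root = i then
      (α.edges.map (sym2val A φ)).prod *
        (α.edges2.map fun e => sym2val A φ e ^ 2 - 1 / (N : ℝ)).prod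
    else 0

namespace Diagram

/-- All edges, with 2-labeled edges counted once. -/
def allE (α : Diagram) : Multiset (Sym2 α.V) := α.edges + α.edges2

/-- No vertex other than the root is isolated. -/
def NoIsolated (α : Diagram) : Prop := ∀ v : α.V, v ≠ α.root → ∃ e ∈ α.allE, v ∈ e

/-- `|E(α)|`, counting 2-labeled edges twice. -/
def nE (α : Diagram) : ℕ := Multiset.card α.edges + 2 * Multiset.card α.edges2

/-- `I(α)`: non-root vertices all of whose incident edges have multiplicity `≥ 2`
or are self-loops (2-labeled edges being treated as single ordinary edges). -/
def I (α : Diagram) : Finset α.V :=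
  Finset.univ.filter fun v =>
    v ≠ α.root ∧ ∀ e ∈ α.allE, v ∈ e → (2 ≤ α.allE.count e ∨ e.IsDiag)

/-- The combinatorial quantity `|V(α)| - 1 - |E(α)| + |I(α)|`. -/
def Dval (α : Diagram) : ℤ :=
  (Fintype.card α.V : ℤ) - 1 - (α.nE : ℤ) + (α.I.card : ℤ)

/-- The underlying simple graph of a diagram. -/
def graph (α : Diagram) : SimpleGraph α.V := SimpleGraph.fromEdgeSet {e | e ∈ α.allE}

/-- Connectivity of the diagram (as a multigraph). -/
def Conn (α : Diagram) : Prop := α.graph.Connected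

/-- A proper diagram: no repeated edges, no self-loops and no 2-labeled edges. -/
def Proper (α : Diagram) : Prop :=
  α.edges.Nodup ∧ (∀ e ∈ α.edges, ¬ e.IsDiag) ∧ α.edges2 = 0

/-- A (rooted) tree diagram: an element of `𝒯`. -/
def IsTree (α : Diagram) : Prop := α.Proper ∧ α.graph.Connected ∧ α.graph.IsAcyclic

/-- Degree of the root (as a multigraph). -/
def rootDeg (α : Diagram) : ℕ := Multiset.card (α.edges.filter fun e => α.root ∈ e)

/-- Membership in `𝒮`: a rooted tree whose root has degree exactly 1. -/
def InS (α : Diagram) : Prop := α.IsTree ∧ α.rootDeg = 1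

/-- The root has degree exactly one, with (unique) neighbour `c`. -/
def RootDeg1 (α : Diagram) : Prop :=
  ∃ c : α.V, c ≠ α.root ∧ α.edges.filter (fun e => α.root ∈ e) = {s(α.root, c)}

end Diagram

/-- Isomorphism of rooted diagrams. -/
def DiagIso (α β : Diagram) : Prop :=
  ∃ g : α.V ≃ β.V, g α.root = β.root ∧ α.edges.map (Sym2.map ⇑g) = β.edges ∧
    α.edges2.map (Sym2.map ⇑g) = β.edges2

/-- `|Aut(α)|`: the number of root-fixing automorphisms of `α`. -/
def autCard (α : Diagram) : ℕ :=
  Nat.card {g : Equiv.Perm α.V // g α.root = α.root ∧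
    α.edges.map (Sym2.map ⇑g) = α.edges ∧ α.edges2.map (Sym2.map ⇑g) = α.edges2}

/-! ### Combinatorial negligibility and asymptotic equality `≐` -/

/-- `a = Θ(n^{-j/2})`. -/
def IsThetaHalf (a : ℕ → ℝ) (j : ℕ) : Prop :=
  ∃ c₁ c₂ : ℝ, 0 < c₁ ∧ 0 < c₂ ∧ ∀ n : ℕ, 1 ≤ n →
    c₁ * (n : ℝ) ^ (-(j : ℝ) / 2) ≤ |a n| ∧ |a n| ≤ c₂ * (n : ℝ) ^ (-(j : ℝ) / 2)

/-- The term `a_n · Z_α` is combinatorially negligible. -/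
def NegligibleTerm (a : ℕ → ℝ) (α : Diagram) : Prop :=
  (∀ n, a n = 0) ∨ ∃ j : ℕ, IsThetaHalf a j ∧ α.Dval ≤ (j : ℤ) - 1

/-- The term `a_n · Z_α` has combinatorial order 1. -/
def Order1Term (a : ℕ → ℝ) (α : Diagram) : Prop :=
  ∃ j : ℕ, IsThetaHalf a j ∧ α.Dval = (j : ℤ)

/-- A (vector-valued) diagram expression: a finite sum of terms `a_n · Z_α`. -/
abbrev DiagExpr : Type 1 := List ((ℕ → ℝ) × Diagram)

def DiagExpr.eval (z : DiagExpr) {N : ℕ} (A : Matrix (Fin N) (Fin N) ℝ) (i : Fin N) : ℝ :=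
  (z.map fun p => p.1 N * Zv A p.2 i).sum

def DiagExpr.Negligible (z : DiagExpr) : Prop := ∀ p ∈ z, NegligibleTerm p.1 p.2

/-- Asymptotic equality `x ≐ y` of two vector-valued quantities: the difference is
(identically, for every symmetric input matrix) a sum of combinatorially
negligible diagram terms. -/
def AsympEqV (x y : (N : ℕ) → Matrix (Fin N) (Fin N) ℝ → Fin N → ℝ) : Prop :=
  ∃ z : DiagExpr, DiagExpr.Negligible z ∧
    ∀ (N : ℕ) (A : Matrix (Fin N) (Fin N) ℝ), A.IsSymm → ∀ i : Fin N,
      x N A i - y N A i = DiagExpr.eval z A i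

/-- `≐` for diagram expressions. -/
def AsympEqE (x y : DiagExpr) : Prop :=
  AsympEqV (fun _ A i => DiagExpr.eval x A i) (fun _ A i => DiagExpr.eval y A i)

/-! ### Scalar diagrams -/

structure SDiagram where
  V : Type
  fintypeV : Fintype V
  decEqV : DecidableEq V
  edges : Multiset (Sym2 V)
  edges2 : Multiset (Sym2 V)

attribute [instance] SDiagram.fintypeV SDiagram.decEqV

def Zs {N : ℕ} (A : Matrix (Fin N) (Fin N) ℝ) (α : SDiagram) : ℝ :=
  ∑ φ : α.V → Fin N,
    if Function.Injective φ then
      (α.edges.map (sym2val A φ)).prod *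
        (α.edges2.map fun e => sym2val A φ e ^ 2 - 1 / (N : ℝ)).prod
    else 0

namespace SDiagram

def allE (α : SDiagram) : Multiset (Sym2 α.V) := α.edges + α.edges2
def NoIsolated (α : SDiagram) : Prop := ∀ v : α.V, ∃ e ∈ α.allE, v ∈ e
def nE (α : SDiagram) : ℕ := Multiset.card α.edges + 2 * Multiset.card α.edges2
def I (α : SDiagram) : Finset α.V :=
  Finset.univ.filter fun v => ∀ e ∈ α.allE, v ∈ e → (2 ≤ α.allE.count e ∨ e.IsDiag)
def Dval (α : SDiagram) : ℤ := (Fintype.card α.V : ℤ) - (α.nE : ℤ) + (α.I.card : ℤ)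
def graph (α : SDiagram) : SimpleGraph α.V := SimpleGraph.fromEdgeSet {e | e ∈ α.allE}
def Proper (α : SDiagram) : Prop :=
  α.edges.Nodup ∧ (∀ e ∈ α.edges, ¬ e.IsDiag) ∧ α.edges2 = 0
def IsTree (α : SDiagram) : Prop := α.Proper ∧ α.graph.Connected ∧ α.graph.IsAcyclic

end SDiagram

def SDiagIso (α β : SDiagram) : Prop :=
  ∃ g : α.V ≃ β.V, α.edges.map (Sym2.map ⇑g) = β.edges ∧
    α.edges2.map (Sym2.map ⇑g) = β.edges2

def autCardS (α : SDiagram) : ℕ :=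
  Nat.card {g : Equiv.Perm α.V //
    α.edges.map (Sym2.map ⇑g) = α.edges ∧ α.edges2.map (Sym2.map ⇑g) = α.edges2}

def NegligibleTermS (a : ℕ → ℝ) (α : SDiagram) : Prop :=
  (∀ n, a n = 0) ∨ ∃ j : ℕ, IsThetaHalf a j ∧ α.Dval ≤ (j : ℤ) - 1

abbrev SDiagExpr : Type 1 := List ((ℕ → ℝ) × SDiagram)

def SDiagExpr.eval (z : SDiagExpr) {N : ℕ} (A : Matrix (Fin N) (Fin N) ℝ) : ℝ :=
  (z.map fun p => p.1 N * Zs A p.2).sum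

def SDiagExpr.Negligible (z : SDiagExpr) : Prop := ∀ p ∈ z, NegligibleTermS p.1 p.2

/-- Asymptotic equality `x ≐ y` of two scalar quantities. -/
def AsympEqS (x y : (N : ℕ) → Matrix (Fin N) (Fin N) ℝ → ℝ) : Prop :=
  ∃ z : SDiagExpr, SDiagExpr.Negligible z ∧
    ∀ (N : ℕ) (A : Matrix (Fin N) (Fin N) ℝ), A.IsSymm → x N A - y N A = SDiagExpr.eval z A

/-! ### The Wigner matrix model -/

/-- Subgaussian distribution on `ℝ` (definition from the paper). -/
def Subgaussian (μ : MeasureTheory.Measure ℝ) : Prop :=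
  ∃ C : ℝ, 0 < C ∧ ∀ q : ℕ, ∫ x, |x| ^ q ∂μ ≤ C ^ q * (q : ℝ) ^ ((q : ℝ) / 2)

/-- The matrix model: `A(n)` is a random symmetric `n × n` matrix whose entries are
independent up to symmetry, with `√n · A_{ii} ~ μ₀` and `√n · A_{ij} ~ μ` (`i ≠ j`),
where `μ, μ₀` are subgaussian, centered, and `μ` has unit variance. -/
structure MatrixModel where
  Ω : Type
  [mΩ : MeasurableSpace Ω]
  P : MeasureTheory.Measure Ω
  [probP : MeasureTheory.IsProbabilityMeasure P]
  μ : MeasureTheory.Measure ℝ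
  μ₀ : MeasureTheory.Measure ℝ
  [probμ : MeasureTheory.IsProbabilityMeasure μ]
  [probμ₀ : MeasureTheory.IsProbabilityMeasure μ₀]
  subgμ : Subgaussian μ
  subgμ₀ : Subgaussian μ₀
  mean_zero : ∫ x, x ∂μ = 0
  mean_zero₀ : ∫ x, x ∂μ₀ = 0
  var_one : ∫ x, x ^ 2 ∂μ = 1
  A : (n : ℕ) → Ω → Matrix (Fin n) (Fin n) ℝ
  meas : ∀ (n : ℕ) (i j : Fin n), Measurable fun ω => A n ω i j
  symm : ∀ (n : ℕ) (ω : Ω), (A n ω).IsSymm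
  indep : ∀ n : ℕ, ProbabilityTheory.iIndepFun
    (fun (p : {p : Fin n × Fin n // p.1 ≤ p.2}) (ω : Ω) => A n ω p.1.1 p.1.2) P
  dist_diag : ∀ (n : ℕ) (i : Fin n),
    MeasureTheory.Measure.map (fun ω => Real.sqrt n * A n ω i i) P = μ₀
  dist_off : ∀ (n : ℕ) (i j : Fin n), i ≠ j →
    MeasureTheory.Measure.map (fun ω => Real.sqrt n * A n ω i j) P = μ

attribute [instance] MatrixModel.mΩ MatrixModel.probP MatrixModel.probμ MatrixModel.probμ₀

open MeasureTheory ProbabilityTheory Filter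

/-! ### Branches of trees, Hermite polynomials, and the asymptotic Gaussian space -/

/-- The diagram's graph with all edges incident to the root removed. -/
def Diagram.offRoot (α : Diagram) : SimpleGraph α.V := α.graph.deleteEdges {e | α.root ∈ e}

/-- The set of vertices belonging to the branch hanging at a root-neighbour `c`. -/
def Diagram.branchSet (α : Diagram) (c : α.V) : Set α.V := {v | α.offRoot.Reachable c v}

/-- The branch of `α` at a root-neighbour `c`, as a rooted diagram (the root is kept). -/
def Diagram.branchAt (α : Diagram) (c : α.V) : Diagram where
  V := {v : α.V // v = α.root ∨ v ∈ α.branchSet c}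
  fintypeV := Fintype.ofFinite _
  decEqV := inferInstance
  root := ⟨α.root, Or.inl rfl⟩
  edges := (α.edges.filter fun e => ∃ v, v ∈ e ∧ v ∈ α.branchSet c).map
    (Sym2.map fun v =>
      if h : v = α.root ∨ v ∈ α.branchSet c then
        (⟨v, h⟩ : {v : α.V // v = α.root ∨ v ∈ α.branchSet c})
      else ⟨α.root, Or.inl rfl⟩)
  edges2 := (α.edges2.filter fun e => ∃ v, v ∈ e ∧ v ∈ α.branchSet c).map
    (Sym2.map fun v =>
      if h : v = α.root ∨ v ∈ α.branchSet c then
        (⟨v, h⟩ : {v : α.V // v = α.root ∨ v ∈ α.branchSet c})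
      else ⟨α.root, Or.inl rfl⟩)

/-- `d_σ(τ)`: the number of branches of the root of `τ` isomorphic to `σ ∈ 𝒮`. -/
def dcount (τ σ : Diagram) : ℕ :=
  Nat.card {c : τ.V // τ.graph.Adj τ.root c ∧ DiagIso (τ.branchAt c) σ}

/-- The monic orthogonal (generalized Hermite) polynomials for `N(0, v)`:
`h_0 = 1`, `h_1 = x`, `h_{k+2} = x·h_{k+1} - v·(k+1)·h_k`. -/
def hermiteVar (v : ℝ) : ℕ → ℝ → ℝ
  | 0, _ => 1
  | 1, x => x
  | k + 2, x => x * hermiteVar v (k + 1) x - v * ((k : ℝ) + 1) * hermiteVar v k x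

/-- Given an enumeration `rep` of representatives of the isomorphism classes of `𝒮`
and a family `G` of corresponding (Gaussian) random variables, the asymptotic random
variable `Z_τ^∞ = ∏_σ h_{d_σ(τ)}(Z_σ^∞; |Aut σ|)` attached to a rooted tree `τ ∈ 𝒯`. -/
def ZinfTree {Ω' : Type} (rep : ℕ → Diagram) (G : ℕ → Ω' → ℝ) (τ : Diagram) (ω : Ω') : ℝ :=
  ∏ᶠ m : ℕ, hermiteVar (autCard (rep m)) (dcount τ (rep m)) (G m ω)

/-- `τ⁺`: extend the root by one edge. -/
def plusD (τ : Diagram) : Diagram where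
  V := Option τ.V
  fintypeV := inferInstance
  decEqV := inferInstance
  root := none
  edges := τ.edges.map (Sym2.map fun v => (some v : Option τ.V)) +
    {s((none : Option τ.V), some τ.root)}
  edges2 := τ.edges2.map (Sym2.map fun v => (some v : Option τ.V))

/-- `σ⁻` for a root of degree 1 with neighbour `c`: delete the root and its unique
edge, re-rooting at `c`. -/
def minusDAux (τ : Diagram) (c : τ.V) (hc : c ≠ τ.root) : Diagram where
  V := {v : τ.V // v ≠ τ.root}
  fintypeV := Fintype.ofFinite _
  decEqV := inferInstance
  root := ⟨c, hc⟩
  edges := (τ.edges.filter fun e => τ.root ∉ e).map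
    (Sym2.map fun v => if h : v = τ.root then (⟨c, hc⟩ : {v : τ.V // v ≠ τ.root}) else ⟨v, h⟩)
  edges2 := (τ.edges2.filter fun e => τ.root ∉ e).map
    (Sym2.map fun v => if h : v = τ.root then (⟨c, hc⟩ : {v : τ.V // v ≠ τ.root}) else ⟨v, h⟩)

/-- `τ⁻` (total version; meaningful when the root has degree exactly one). -/
def minusD (τ : Diagram) : Diagram :=
  if h : τ.RootDeg1 then minusDAux τ h.choose h.choose_spec.1 else τ

/-! ### Removal of hanging double edges -/

/-- Remove a hanging double edge `{u, v}` (where `v` is a hanging non-root vertex)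
together with the vertex `v`. -/
def rmHDE (α : Diagram) (u v : α.V) (huv : u ≠ v) (hv : v ≠ α.root) : Diagram where
  V := {w : α.V // w ≠ v}
  fintypeV := Fintype.ofFinite _
  decEqV := inferInstance
  root := ⟨α.root, fun h => hv h.symm⟩
  edges := (α.edges - Multiset.replicate 2 s(u, v)).map
    (Sym2.map fun w => if h : w = v then (⟨u, huv⟩ : {w : α.V // w ≠ v}) else ⟨w, h⟩)
  edges2 := α.edges2.map
    (Sym2.map fun w => if h : w = v then (⟨u, huv⟩ : {w : α.V // w ≠ v}) else ⟨w, h⟩)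

/-- Replace a hanging double edge `{u, v}` by a single 2-labeled edge. -/
def relabelHDE (α : Diagram) (u v : α.V) : Diagram :=
  { α with edges := α.edges - Multiset.replicate 2 s(u, v), edges2 := α.edges2 + {s(u, v)} }

/-- One step of deleting a hanging double edge (up to isomorphism). -/
def StepRemove (α β : Diagram) : Prop :=
  ∃ (u v : α.V) (huv : u ≠ v) (hv : v ≠ α.root),
    α.edges.count s(u, v) = 2 ∧ (∀ e ∈ α.edges, v ∈ e → e = s(u, v)) ∧
    (∀ e ∈ α.edges2, v ∉ e) ∧ DiagIso β (rmHDE α u v huv hv)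

/-- The asymptotic random variable `Z_α^∞` of a connected diagram `α`: if repeatedly
deleting hanging double edges transforms `α` into a rooted tree `τ ∈ 𝒯` then it is
`Z_τ^∞`, and otherwise it is `0`. -/
def ZinfGen {Ω' : Type} (rep : ℕ → Diagram) (G : ℕ → Ω' → ℝ) (α : Diagram) : Ω' → ℝ :=
  if h : ∃ τ : Diagram, Relation.ReflTransGen StepRemove α τ ∧ τ.IsTree then
    ZinfTree rep G h.choose
  else fun _ => 0

/-! ### Tree expressions -/

/-- A tree(-diagram) expression with coefficients independent of `n`. -/
abbrev TreeExpr : Type 1 := List (ℝ × Diagram)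

def TreeExpr.eval (x : TreeExpr) {N : ℕ} (A : Matrix (Fin N) (Fin N) ℝ) (i : Fin N) : ℝ :=
  (x.map fun p => p.1 * Zv A p.2 i).sum

/-- The asymptotic state attached to a tree expression. -/
def TreeExpr.inf {Ω' : Type} (rep : ℕ → Diagram) (G : ℕ → Ω' → ℝ) (x : TreeExpr) (ω : Ω') : ℝ :=
  (x.map fun p => p.1 * ZinfTree rep G p.2 ω).sum

/-- The linear operator `⁺` on tree expressions. -/
def TreeExpr.plusE (x : TreeExpr) : TreeExpr := x.map fun p => (p.1, plusD p.2)

/-- The linear operator `⁻` on tree expressions (trees whose root does not have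
degree one are sent to `0`). -/
def TreeExpr.minusE (x : TreeExpr) : TreeExpr :=
  x.flatMap fun p =>
    if h : p.2.RootDeg1 then [(p.1, minusDAux p.2 h.choose h.choose_spec.1)] else []

/-- The asymptotic Gaussian space: an enumeration `rep` of pairwise non-isomorphic
representatives of all isomorphism classes of `𝒮`, together with a family `G m i`
(`m` = class, `i` = coordinate) of independent centered Gaussians with variances
`|Aut(rep m)|`. -/
structure SRep {Ω' : Type} [MeasurableSpace Ω'] (P' : Measure Ω') (rep : ℕ → Diagram)
    (G : ℕ → ℕ → Ω' → ℝ) : Prop where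
  mem : ∀ m, (rep m).InS
  pairwise : ∀ m m', m ≠ m' → ¬ DiagIso (rep m) (rep m')
  complete : ∀ σ : Diagram, σ.InS → ∃ m, DiagIso σ (rep m)
  meas : ∀ m i, Measurable (G m i)
  dist : ∀ m i, Measure.map (G m i) P' = gaussianReal 0 (autCard (rep m) : NNReal)
  indep : iIndepFun (fun p : ℕ × ℕ => G p.1 p.2) P'

/-- As `SRep`, with a single coordinate. -/
structure SRep1 {Ω' : Type} [MeasurableSpace Ω'] (P' : Measure Ω') (rep : ℕ → Diagram)
    (G : ℕ → Ω' → ℝ) : Prop where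
  mem : ∀ m, (rep m).InS
  pairwise : ∀ m m', m ≠ m' → ¬ DiagIso (rep m) (rep m')
  complete : ∀ σ : Diagram, σ.InS → ∃ m, DiagIso σ (rep m)
  meas : ∀ m, Measurable (G m)
  dist : ∀ m, Measure.map (G m) P' = gaussianReal 0 (autCard (rep m) : NNReal)
  indep : iIndepFun G P'

/-! ### Products of tree diagrams by matchings of branches -/

/-- Index type of the branches of a family of rooted trees. -/
abbrev BIdx {q : ℕ} (τ : Fin q → Diagram) : Type := Σ j : Fin q, (τ j).V

/-- A partial matching of pairwise-isomorphic root-branches of `τ 0, …, τ (q-1)` with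
no two matched branches from the same tree. -/
def IsBMatch {q : ℕ} (τ : Fin q → Diagram) (M : Finset (Sym2 (BIdx τ))) : Prop :=
  (∀ p ∈ M, ¬ p.IsDiag) ∧
  (∀ p ∈ M, ∀ p' ∈ M, p ≠ p' → ∀ b : BIdx τ, b ∈ p → b ∉ p') ∧
  (∀ b b' : BIdx τ, s(b, b') ∈ M →
    b.1 ≠ b'.1 ∧ (τ b.1).graph.Adj (τ b.1).root b.2 ∧ (τ b'.1).graph.Adj (τ b'.1).root b'.2 ∧
      DiagIso ((τ b.1).branchAt b.2) ((τ b'.1).branchAt b'.2))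

/-- `|Aut(σ)|` for a matched pair of isomorphic branches. -/
def pairAut {q : ℕ} (τ : Fin q → Diagram) : Sym2 (BIdx τ) → ℕ :=
  Sym2.lift ⟨fun b b' => max (autCard ((τ b.1).branchAt b.2)) (autCard ((τ b'.1).branchAt b'.2)),
    fun b b' => max_comm _ _⟩

def matchCoeff {q : ℕ} (τ : Fin q → Diagram) (M : Finset (Sym2 (BIdx τ))) : ℝ :=
  ∏ p ∈ M, (pairAut τ p : ℝ)

/-- A vertex belonging to a matched (hence deleted) branch. -/
def BDeleted {q : ℕ} (τ : Fin q → Diagram) (M : Finset (Sym2 (BIdx τ))) (v : BIdx τ) : Prop :=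
  ∃ p ∈ M, ∃ c : (τ v.1).V, (⟨v.1, c⟩ : BIdx τ) ∈ p ∧ v.2 ∈ (τ v.1).branchSet c

/-- `τ_M`: merge the roots of `τ 0, …, τ (q-1)` and delete all branches matched in `M`. -/
def mergedTree {q : ℕ} (τ : Fin q → Diagram) (M : Finset (Sym2 (BIdx τ))) : Diagram where
  V := Option {v : BIdx τ // v.2 ≠ (τ v.1).root ∧ ¬ BDeleted τ M v}
  fintypeV := Fintype.ofFinite _
  decEqV := inferInstance
  root := none
  edges := (Finset.univ : Finset (Fin q)).val.bind fun j =>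
    ((τ j).edges.filter fun e => ∀ w, w ∈ e → w = (τ j).root ∨ ¬ BDeleted τ M ⟨j, w⟩).map
      (Sym2.map fun w =>
        if h : w ≠ (τ j).root ∧ ¬ BDeleted τ M ⟨j, w⟩ then
          (some ⟨⟨j, w⟩, h⟩ : Option {v : BIdx τ // v.2 ≠ (τ v.1).root ∧ ¬ BDeleted τ M v})
        else none)
  edges2 := 0

/-- The product of a list of tree diagrams (with coefficients), expanded over all
matchings of isomorphic root-branches. -/
def treeListProd (l : List (ℝ × Diagram)) : TreeExpr :=
  ((Finset.univ : Finset (Finset (Sym2 (BIdx fun j : Fin l.length => (l.get j).2)))).filter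
      (IsBMatch fun j : Fin l.length => (l.get j).2)).toList.map
    fun M => ((l.map Prod.fst).prod * matchCoeff _ M, mergedTree _ M)

def scaleTE (c : ℝ) (x : TreeExpr) : TreeExpr := x.map fun p => (c * p.1, p.2)

/-- Application of a polynomial to tree expressions, expanding each monomial via the
matching-product of tree diagrams. -/
def applyPoly {k : ℕ} (f : MvPolynomial (Fin k) ℝ) (xs : Fin k → TreeExpr) : TreeExpr :=
  f.support.toList.flatMap fun d =>
    (List.sections ((List.finRange k).flatMap fun s => List.replicate (d s) (xs s))).flatMap
      fun choice => scaleTE (MvPolynomial.coeff d f) (treeListProd choice)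

/-! ### General first-order methods -/

/-- One step of a GFOM: multiply by `A`, or apply a polynomial of the previous states
componentwise. -/
inductive GFOMStep : ℕ → Type where
  | matmul : {t : ℕ} → GFOMStep t
  | nonlin : {t : ℕ} → MvPolynomial (Fin (t + 1)) ℝ → GFOMStep t

/-- The state `x_t ∈ ℝⁿ` of a GFOM with input matrix `A`; in a `nonlin` step with
polynomial `f`, coordinate `s` of `f` receives `x_{t-s}`. -/
def gfomState {n : ℕ} (steps : (t : ℕ) → GFOMStep t) (A : Matrix (Fin n) (Fin n) ℝ) :
    ℕ → Fin n → ℝ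
  | 0 => fun _ => 1
  | t + 1 =>
    match steps t with
    | GFOMStep.matmul => A.mulVec (gfomState steps A t)
    | GFOMStep.nonlin f => fun i =>
        MvPolynomial.eval (fun s : Fin (t + 1) => gfomState steps A (t - (s : ℕ)) i) f
  termination_by t => t
  decreasing_by all_goals omega

/-- The singleton diagram (representing the all-ones vector). -/
def singletonD : Diagram where
  V := PUnit
  fintypeV := inferInstance
  decEqV := inferInstance
  root := PUnit.unit
  edges := 0
  edges2 := 0

/-- Multiplication by `A` on the trees: `Z_τ ↦ Z_{τ⁺} (+ Z_{τ⁻}` if `τ ∈ 𝒮)`. -/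
def stepMul (x : TreeExpr) : TreeExpr :=
  x.flatMap fun p =>
    (p.1, plusD p.2) ::
      (if h : p.2.RootDeg1 then [(p.1, minusDAux p.2 h.choose h.choose_spec.1)] else [])

/-- The tree approximation `x̂_t` of a GFOM: the GFOM operations performed on the
tree diagrams only. -/
def hatState (steps : (t : ℕ) → GFOMStep t) : ℕ → TreeExpr
  | 0 => [(1, singletonD)]
  | t + 1 =>
    match steps t with
    | GFOMStep.matmul => stepMul (hatState steps t)
    | GFOMStep.nonlin f => applyPoly f fun s : Fin (t + 1) => hatState steps (t - (s : ℕ))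
  termination_by t => t
  decreasing_by all_goals omega

/-! ### Belief propagation and approximate message passing -/

/-- Belief propagation messages `m^t_{i→j}` for the nonlinearities `f`; in `f t`,
coordinate `s ≤ t-1` receives `∑_{k≠j} A_{ik} m^{t-1-s}_{k→i}`, and the last
coordinate receives `m⁰ = 1`. -/
def bpMsg {n : ℕ} (f : (t : ℕ) → MvPolynomial (Fin (t + 1)) ℝ)
    (A : Matrix (Fin n) (Fin n) ℝ) : ℕ → Fin n → Fin n → ℝ
  | 0 => fun _ _ => 1
  | t + 1 => fun i j =>
      MvPolynomial.eval (fun s : Fin (t + 2) =>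
        if (s : ℕ) ≤ t then ∑ k ∈ Finset.univ.erase j, A i k * bpMsg f A (t - (s : ℕ)) k i
        else 1) (f (t + 1))
  termination_by t => t
  decreasing_by all_goals omega

/-- Belief propagation output `m^t_i`. -/
def bpOut {n : ℕ} (f ftil : (t : ℕ) → MvPolynomial (Fin (t + 1)) ℝ)
    (A : Matrix (Fin n) (Fin n) ℝ) (t : ℕ) (i : Fin n) : ℝ :=
  MvPolynomial.eval (fun s : Fin (t + 1) =>
    if (s : ℕ) < t then ∑ k, A i k * bpMsg f A (t - 1 - (s : ℕ)) k i else 1) (ftil t)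

/-- The AMP iterates `w^t` with Onsager correction; in `f t`, coordinate `s`
receives `w^{t-s}`. -/
def ampW {n : ℕ} (f : (t : ℕ) → MvPolynomial (Fin (t + 1)) ℝ)
    (A : Matrix (Fin n) (Fin n) ℝ) : ℕ → Fin n → ℝ
  | 0 => fun _ => 1
  | t + 1 => fun i =>
      A.mulVec (fun k =>
        MvPolynomial.eval (fun s : Fin (t + 1) => ampW f A (t - (s : ℕ)) k) (f t)) i -
      ∑ s : Fin (t + 1),
        (if 1 ≤ (s : ℕ) then
          ((1 / (n : ℝ)) * ∑ k : Fin n,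
            MvPolynomial.eval (fun r : Fin (t + 1) => ampW f A (t - (r : ℕ)) k)
              (MvPolynomial.pderiv (⟨t - (s : ℕ), by omega⟩ : Fin (t + 1)) (f t))) *
          MvPolynomial.eval
            (fun r : Fin (((s : ℕ) - 1) + 1) => ampW f A (((s : ℕ) - 1) - (r : ℕ)) i)
            (f ((s : ℕ) - 1))
        else 0)
  termination_by t => t
  decreasing_by all_goals omega

/-- The AMP output `m^t = f̃_t(w^t, …, w^0)`. -/
def ampOut {n : ℕ} (f ftil : (t : ℕ) → MvPolynomial (Fin (t + 1)) ℝ)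
    (A : Matrix (Fin n) (Fin n) ℝ) (t : ℕ) (i : Fin n) : ℝ :=
  MvPolynomial.eval (fun s : Fin (t + 1) => ampW f A (t - (s : ℕ)) i) (ftil t)

/-! ### Connected components of scalar diagrams -/

def SDiagram.compSet (ρ : SDiagram) (v : ρ.V) : Set ρ.V := {w | ρ.graph.Reachable v w}

/-- The connected component of `v` in `ρ` is isomorphic to the scalar diagram `τ`. -/
def CompIso (ρ : SDiagram) (v : ρ.V) (τ : SDiagram) : Prop :=
  ∃ ψ : τ.V → ρ.V, Function.Injective ψ ∧ Set.range ψ = ρ.compSet v ∧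
    τ.edges.map (Sym2.map ψ) = ρ.edges.filter (fun e => ∀ w ∈ e, w ∈ ρ.compSet v) ∧
    τ.edges2.map (Sym2.map ψ) = ρ.edges2.filter (fun e => ∀ w ∈ e, w ∈ ρ.compSet v)

/-- The number of connected components of `ρ` isomorphic to `τ`. -/
def compCount (ρ τ : SDiagram) : ℕ :=
  Nat.card {K : ρ.graph.ConnectedComponent //
    ∃ v : ρ.V, ρ.graph.connectedComponentMk v = K ∧ CompIso ρ v τ}

/-- The number of connected components of a scalar diagram. -/
def numComps (ρ : SDiagram) : ℕ := Nat.card ρ.graph.ConnectedComponent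

/-! ### Debiased power iteration -/

/-- Debiased power iteration: `x₀ = 1`, `x₁ = A·1`, `x_{t+2} = A·x_{t+1} - x_t`. -/
def dpi {n : ℕ} (A : Matrix (Fin n) (Fin n) ℝ) : ℕ → Fin n → ℝ
  | 0 => fun _ => 1
  | 1 => A.mulVec fun _ => 1
  | t + 2 => fun i => A.mulVec (dpi A (t + 1)) i - dpi A t i

/-- The path with `t` edges, rooted at one endpoint. -/
def pathD (t : ℕ) : Diagram where
  V := Fin (t + 1)
  fintypeV := inferInstance
  decEqV := inferInstance
  root := 0
  edges := (Finset.univ : Finset (Fin t)).val.map fun k =>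
    s((k.castSucc : Fin (t + 1)), (k.succ : Fin (t + 1)))
  edges2 := 0


/-- A term which is combinatorially negligible or of combinatorial order 1. -/
def TermOrderLE1 (p : (ℕ → ℝ) × Diagram) : Prop :=
  NegligibleTerm p.1 p.2 ∨ Order1Term p.1 p.2


/-! ### Auxiliary material for statement 10 -/

section S10Aux

open Finset

/-- `Fintype.card` does not depend on the instance. -/
lemma s10_card_irrel (X : Type) (h1 h2 : Fintype X) :
    @Fintype.card X h1 = @Fintype.card X h2 := by
  congr 1
  exact Subsingleton.elim _ _

lemma s10_sym2val_map {V W : Type} {N : ℕ} (A : Matrix (Fin N) (Fin N) ℝ)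
    (φ : W → Fin N) (f : V → W) (e : Sym2 V) :
    sym2val A φ (Sym2.map f e) = sym2val A (φ ∘ f) e := by
  induction e using Sym2.ind with
  | _ a b => rw [Sym2.map_pair_eq]; simp [sym2val]

lemma s10_sym2val_symm {V : Type} {N : ℕ} {A : Matrix (Fin N) (Fin N) ℝ} (hA : A.IsSymm)
    (φ : V → Fin N) (a b : V) : sym2val A φ s(a, b) = A (φ a) (φ b) := by
  simp only [sym2val, Sym2.lift_mk]
  rw [hA.apply (φ a) (φ b)]
  ring

/-- The product of matrix entries over the edges of a diagram. -/
def s10P {N : ℕ} (A : Matrix (Fin N) (Fin N) ℝ) (α : Diagram) (φ : α.V → Fin N) : ℝ :=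
  (α.edges.map (sym2val A φ)).prod *
    (α.edges2.map fun e => sym2val A φ e ^ 2 - 1 / (N : ℝ)).prod

lemma s10_Zv_eq {N : ℕ} (A : Matrix (Fin N) (Fin N) ℝ) (α : Diagram) (i : Fin N) :
    Zv A α i = ∑ φ : α.V → Fin N,
      if Function.Injective φ ∧ φ α.root = i then s10P A α φ else 0 := rfl

/-- Contract the new root with the vertex `v`: add the edge `{root, v}` and re-root at `v`. -/
def contractD (α : Diagram) (v : α.V) : Diagram :=
  { α with root := v, edges := α.edges + {s(α.root, v)} }

lemma s10P_plusD {N : ℕ} (A : Matrix (Fin N) (Fin N) ℝ) (α : Diagram)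
    (ψ : Option α.V → Fin N) :
    s10P A (plusD α) ψ
      = sym2val A ψ s((none : Option α.V), some α.root) * s10P A α (ψ ∘ some) := by
  simp only [s10P, plusD, Multiset.map_add, Multiset.prod_add, Multiset.map_map,
    Multiset.map_singleton, Multiset.prod_singleton, Function.comp_def, s10_sym2val_map]
  ring

lemma s10P_contractD {N : ℕ} (A : Matrix (Fin N) (Fin N) ℝ) (α : Diagram) (v : α.V)
    (φ : α.V → Fin N) :
    s10P A (contractD α v) φ = sym2val A φ s(α.root, v) * s10P A α φ := by
  simp only [s10P, contractD, Multiset.map_add, Multiset.prod_add, Multiset.map_singleton,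
    Multiset.prod_singleton]
  ring

lemma s10_ite_split {P Q : Prop} [Decidable P] [Decidable Q] (a : ℝ) :
    (if P then a else 0) = (if P ∧ ¬ Q then a else 0) + (if P ∧ Q then a else 0) := by
  by_cases hP : P <;> by_cases hQ : Q <;> simp [hP, hQ]

lemma s10_ite_mul_ite {P Q : Prop} [Decidable P] [Decidable Q] (a b : ℝ) :
    (if P then a else 0) * (if Q then b else 0) = if P ∧ Q then a * b else 0 := by
  by_cases hP : P <;> by_cases hQ : Q <;> simp [hP, hQ]

lemma s10_of_mem_filter {X : Type} {p : X → Prop} {d : DecidablePred p} {s : Finset X}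
    {x : X} (h : x ∈ @Finset.filter X p d s) : p x :=
  ((@Finset.mem_filter X p d s x).mp h).2

lemma s10_mem_filter_of {X : Type} {p : X → Prop} {d : DecidablePred p} {s : Finset X}
    {x : X} (hs : x ∈ s) (hp : p x) : x ∈ @Finset.filter X p d s :=
  (@Finset.mem_filter X p d s x).mpr ⟨hs, hp⟩

/-- Multiplication by `A` in the diagram basis, for a single diagram. -/
lemma s10_Zv_mulVec {N : ℕ} (A : Matrix (Fin N) (Fin N) ℝ) (hA : A.IsSymm)
    (α : Diagram) (i : Fin N) :
    ∑ r, A i r * Zv A α r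
      = Zv A (plusD α) i + ∑ v : α.V, Zv A (contractD α v) i := by
  classical
  have hL : ∑ r, A i r * Zv A α r
      = ∑ φ : α.V → Fin N,
          if Function.Injective φ then A i (φ α.root) * s10P A α φ else 0 := by
    simp only [s10_Zv_eq, Finset.mul_sum]
    rw [Finset.sum_comm]
    refine Finset.sum_congr rfl fun φ _ => ?_
    by_cases hφ : Function.Injective φ
    · simp only [hφ, true_and, mul_ite, mul_zero]
      rw [Finset.sum_ite_eq]
      simp
    · simp [hφ]
  have hplus : Zv A (plusD α) i
      = ∑ φ : α.V → Fin N,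
          if Function.Injective φ ∧ ¬ (∃ v, φ v = i) then A i (φ α.root) * s10P A α φ
          else 0 := by
    rw [s10_Zv_eq, ← Finset.sum_filter, ← Finset.sum_filter]
    refine Finset.sum_nbij' (fun ψ => ψ ∘ some) (fun φ => fun o => o.elim i φ)
      ?_ ?_ ?_ ?_ ?_
    · intro ψ hψ
      simp only [Finset.mem_filter, Finset.mem_univ, true_and] at hψ ⊢
      refine ⟨hψ.1.comp (Option.some_injective _), ?_⟩
      rintro ⟨v, hv⟩
      have h2 : ψ none = i := hψ.2
      have : (some v : Option α.V) = none := hψ.1 ((hv :).trans h2.symm)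
      exact nomatch this
    · intro φ hφ
      simp only [Finset.mem_filter, Finset.mem_univ, true_and] at hφ ⊢
      constructor
      · intro o1 o2 h
        match o1, o2 with
        | none, none => rfl
        | some a, some b => exact congrArg some (hφ.1 h)
        | some a, none => exact absurd ⟨a, h⟩ hφ.2
        | none, some b => exact absurd ⟨b, h.symm⟩ hφ.2
      · rfl
    · intro ψ hψ
      simp only [Finset.mem_filter, Finset.mem_univ, true_and] at hψ
      funext o
      cases o with
      | none => exact hψ.2.symm
      | some a => rfl
    · intro φ _
      rfl
    · intro ψ hψ
      simp only [Finset.mem_filter, Finset.mem_univ, true_and] at hψ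
      have h2 : ψ none = i := hψ.2
      rw [s10P_plusD A α ψ]
      congr 1
      rw [s10_sym2val_symm (V := Option α.V) hA ψ none (some α.root), h2]
      rfl
  have hcontr : ∀ v : α.V, Zv A (contractD α v) i
      = ∑ φ : α.V → Fin N,
          if Function.Injective φ ∧ φ v = i then A i (φ α.root) * s10P A α φ else 0 := by
    intro v
    rw [s10_Zv_eq, ← Finset.sum_filter, ← Finset.sum_filter]
    refine Finset.sum_congr rfl fun φ hφ => ?_
    have hφ : Function.Injective φ ∧ φ v = i := s10_of_mem_filter
      (p := fun a : α.V → Fin N => Function.Injective a ∧ a v = i) hφ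
    have hroot : (contractD α v).root = v := rfl
    rw [s10P_contractD A α v φ, s10_sym2val_symm (V := α.V) hA φ α.root v]
    rw [show φ v = i from hφ.2, hA.apply]
  have hsum : ∑ v : α.V, Zv A (contractD α v) i
      = ∑ φ : α.V → Fin N,
          if Function.Injective φ ∧ ∃ v, φ v = i then A i (φ α.root) * s10P A α φ
          else 0 := by
    simp only [hcontr]
    rw [Finset.sum_comm]
    refine Finset.sum_congr rfl fun φ _ => ?_
    by_cases hφ : Function.Injective φ
    · by_cases hex : ∃ v, φ v = i
      · obtain ⟨v₀, hv₀⟩ := hex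
        have huniq : ∀ v : α.V, (φ v = i) = (v = v₀) := fun v =>
          propext ⟨fun h => hφ (h.trans hv₀.symm), fun h => h ▸ hv₀⟩
        simp only [hφ, true_and, huniq]
        rw [Finset.sum_ite_eq']
        simp only [Finset.mem_univ, if_true]
        rw [if_pos ⟨v₀, rfl⟩]
      · have : ∀ v : α.V, ¬ (Function.Injective φ ∧ φ v = i) := by
          intro v hv
          exact hex ⟨v, hv.2⟩
        simp only [hφ, true_and]
        rw [if_neg hex]
        refine Finset.sum_eq_zero fun v _ => ?_
        rw [if_neg (fun h => hex ⟨v, h⟩)]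
    · simp [hφ]
  rw [hL, hplus, hsum, ← Finset.sum_add_distrib]
  refine Finset.sum_congr rfl fun φ _ => ?_
  by_cases h1 : Function.Injective φ <;> by_cases h2 : ∃ v, φ v = i <;> simp [h1, h2]

/-! #### Gluings of two diagrams -/

/-- A gluing datum: a partial injection from the non-root vertices of `β`
to the non-root vertices of `α`. -/
abbrev Gluing (α β : Diagram) : Type :=
  {m : β.V → Option α.V // m β.root = none ∧ (∀ v a, m v = some a → a ≠ α.root) ∧
    ∀ v w a, m v = some a → m w = some a → v = w}

noncomputable instance (α β : Diagram) : Fintype (Gluing α β) := Fintype.ofFinite _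

def glueMap (α β : Diagram) (g : Gluing α β) (v : β.V) :
    α.V ⊕ {w : β.V // w ≠ β.root ∧ g.1 w = none} :=
  if h : v ≠ β.root ∧ g.1 v = none then Sum.inr ⟨v, h⟩
  else Sum.inl (match g.1 v with
    | some a => a
    | none => α.root)

/-- The glued diagram of `α` and `β` along a gluing. -/
def glueD (α β : Diagram) (g : Gluing α β) : Diagram where
  V := α.V ⊕ {w : β.V // w ≠ β.root ∧ g.1 w = none}
  fintypeV := Fintype.ofFinite _
  decEqV := inferInstance
  root := Sum.inl α.root
  edges := α.edges.map (Sym2.map Sum.inl) + β.edges.map (Sym2.map (glueMap α β g))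
  edges2 := α.edges2.map (Sym2.map Sum.inl) + β.edges2.map (Sym2.map (glueMap α β g))

lemma glueMap_root (α β : Diagram) (g : Gluing α β) :
    glueMap α β g β.root = Sum.inl α.root := by
  unfold glueMap
  rw [dif_neg (by simp), g.2.1]

lemma glueMap_some {α β : Diagram} (g : Gluing α β) {v : β.V} {a : α.V}
    (h : g.1 v = some a) : glueMap α β g v = Sum.inl a := by
  unfold glueMap
  rw [dif_neg (by simp [h]), h]

lemma glueMap_none {α β : Diagram} (g : Gluing α β) {v : β.V}
    (h : v ≠ β.root ∧ g.1 v = none) : glueMap α β g v = Sum.inr ⟨v, h⟩ := by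
  unfold glueMap
  rw [dif_pos h]

lemma glueMap_inj (α β : Diagram) (g : Gluing α β) :
    Function.Injective (glueMap α β g) := by
  intro v w h
  by_cases hv : v ≠ β.root ∧ g.1 v = none <;> by_cases hw : w ≠ β.root ∧ g.1 w = none
  · rw [glueMap_none g hv, glueMap_none g hw] at h
    exact congrArg Subtype.val (Sum.inr.inj h)
  · exfalso
    rw [glueMap_none g hv] at h
    rcases how : g.1 w with _ | b
    · have hw' : w = β.root := by
        by_contra hne; exact hw ⟨hne, how⟩
      rw [hw', glueMap_root] at h
      exact nomatch h
    · rw [glueMap_some g how] at h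
      exact nomatch h
  · exfalso
    rw [glueMap_none g hw] at h
    rcases hov : g.1 v with _ | b
    · have hv' : v = β.root := by
        by_contra hne; exact hv ⟨hne, hov⟩
      rw [hv', glueMap_root] at h
      exact nomatch h
    · rw [glueMap_some g hov] at h
      exact nomatch h
  · rcases hov : g.1 v with _ | a
    · have hv' : v = β.root := by
        by_contra hne; exact hv ⟨hne, hov⟩
      rcases how : g.1 w with _ | b
      · have hw' : w = β.root := by
          by_contra hne; exact hw ⟨hne, how⟩
        rw [hv', hw']
      · rw [hv', glueMap_root, glueMap_some g how] at h
        exact absurd (Sum.inl.inj h).symm (g.2.2.1 w b how)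
    · rcases how : g.1 w with _ | b
      · have hw' : w = β.root := by
          by_contra hne; exact hw ⟨hne, how⟩
        rw [hw', glueMap_root, glueMap_some g hov] at h
        exact absurd (Sum.inl.inj h) (g.2.2.1 v a hov)
      · rw [glueMap_some g hov, glueMap_some g how] at h
        have hab : a = b := Sum.inl.inj h
        exact g.2.2.2 v w a hov (hab ▸ how)

/-- The partial merging function associated to a pair of maps. -/
def mkFun (α β : Diagram) {N : ℕ} (φ : α.V → Fin N) (ψ : β.V → Fin N) (v : β.V) :
    Option α.V :=
  if hv : v ≠ β.root ∧ ∃ a, φ a = ψ v then some hv.2.choose else none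

lemma mkFun_eq_some {α β : Diagram} {N : ℕ} {φ : α.V → Fin N} {ψ : β.V → Fin N}
    (hφ : Function.Injective φ) {v : β.V} {a : α.V} :
    mkFun α β φ ψ v = some a ↔ v ≠ β.root ∧ φ a = ψ v := by
  unfold mkFun
  constructor
  · intro hva
    by_cases hv : v ≠ β.root ∧ ∃ b, φ b = ψ v
    · rw [dif_pos hv] at hva
      exact ⟨hv.1, by rw [← Option.some.inj hva]; exact hv.2.choose_spec⟩
    · rw [dif_neg hv] at hva; exact nomatch hva
  · rintro ⟨hv, ha⟩
    have hv' : v ≠ β.root ∧ ∃ b, φ b = ψ v := ⟨hv, a, ha⟩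
    rw [dif_pos hv']
    exact congrArg some (hφ (hv'.2.choose_spec.trans ha.symm))

/-- The gluing associated to a pair of injections agreeing on the roots. -/
def mkGluing (α β : Diagram) {N : ℕ} (φ : α.V → Fin N) (ψ : β.V → Fin N) : Gluing α β :=
  if h : Function.Injective φ ∧ Function.Injective ψ ∧ φ α.root = ψ β.root then
    ⟨mkFun α β φ ψ, by
      refine ⟨?_, fun v a hva => ?_, fun v w a hva hwa => ?_⟩
      · unfold mkFun; exact dif_neg (by simp)
      · obtain ⟨hv, ha⟩ := (mkFun_eq_some h.1).mp hva
        rintro rfl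
        exact hv (h.2.1 (ha.symm.trans h.2.2))
      · obtain ⟨hv, ha⟩ := (mkFun_eq_some h.1).mp hva
        obtain ⟨hw, hb⟩ := (mkFun_eq_some h.1).mp hwa
        exact h.2.1 (ha.symm.trans hb)⟩
  else ⟨fun _ => none,
    ⟨rfl, fun v a h' => absurd h'.symm (Option.some_ne_none a),
      fun v w a h' _ => absurd h'.symm (Option.some_ne_none a)⟩⟩

lemma mkGluing_some {α β : Diagram} {N : ℕ} {φ : α.V → Fin N} {ψ : β.V → Fin N}
    (h : Function.Injective φ ∧ Function.Injective ψ ∧ φ α.root = ψ β.root) {v : β.V}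
    {a : α.V} :
    (mkGluing α β φ ψ).1 v = some a ↔ v ≠ β.root ∧ φ a = ψ v := by
  unfold mkGluing
  rw [dif_pos h]
  exact mkFun_eq_some h.1

lemma s10P_glue_aux {V1 V2 W : Type} {N : ℕ} (A : Matrix (Fin N) (Fin N) ℝ)
    (χ : W → Fin N) (f1 : V1 → W) (f2 : V2 → W) (e1 e1' : Multiset (Sym2 V1))
    (e2 e2' : Multiset (Sym2 V2)) :
    ((e1.map (Sym2.map f1) + e2.map (Sym2.map f2)).map (sym2val A χ)).prod *
        ((e1'.map (Sym2.map f1) + e2'.map (Sym2.map f2)).map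
          fun e => sym2val A χ e ^ 2 - 1 / (N : ℝ)).prod
      = ((e1.map (sym2val A (χ ∘ f1))).prod *
          (e1'.map fun e => sym2val A (χ ∘ f1) e ^ 2 - 1 / (N : ℝ)).prod) *
        ((e2.map (sym2val A (χ ∘ f2))).prod *
          (e2'.map fun e => sym2val A (χ ∘ f2) e ^ 2 - 1 / (N : ℝ)).prod) := by
  simp only [Multiset.map_add, Multiset.prod_add, Multiset.map_map,
    Function.comp_def, s10_sym2val_map]
  ring

lemma s10P_glueD {N : ℕ} (A : Matrix (Fin N) (Fin N) ℝ) (α β : Diagram) (g : Gluing α β)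
    (χ : (glueD α β g).V → Fin N) :
    s10P A (glueD α β g) χ
      = s10P A α (χ ∘ Sum.inl) * s10P A β (χ ∘ glueMap α β g) := by
  exact s10P_glue_aux A χ Sum.inl (glueMap α β g) α.edges α.edges2 β.edges β.edges2

/-- Componentwise product of two diagram vectors in the diagram basis. -/
lemma s10_Zv_glue {N : ℕ} (A : Matrix (Fin N) (Fin N) ℝ) (α β : Diagram) (i : Fin N) :
    Zv A α i * Zv A β i = ∑ g : Gluing α β, Zv A (glueD α β g) i := by
  classical
  rw [s10_Zv_eq, s10_Zv_eq, Finset.sum_mul_sum]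
  simp only [s10_ite_mul_ite]
  rw [← Fintype.sum_prod_type']
  rw [← Finset.sum_filter]
  rw [← Finset.sum_fiberwise_of_maps_to
    (g := fun p : (α.V → Fin N) × (β.V → Fin N) => mkGluing α β p.1 p.2)
    (fun p _ => Finset.mem_univ _)]
  refine Finset.sum_congr rfl fun g _ => ?_
  rw [s10_Zv_eq, ← Finset.sum_filter, Finset.filter_filter]
  have hcomp : ∀ p : (α.V → Fin N) × (β.V → Fin N),
      ((Function.Injective p.1 ∧ p.1 α.root = i) ∧ Function.Injective p.2 ∧ p.2 β.root = i) →
      mkGluing α β p.1 p.2 = g →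
      (Sum.elim p.1 (fun w => p.2 w.1) ∘ glueMap α β g : β.V → Fin N) = p.2 := by
    rintro ⟨φ, ψ⟩ ⟨⟨hφi, hφr⟩, hψi, hψr⟩ hg
    have hc : Function.Injective φ ∧ Function.Injective ψ ∧ φ α.root = ψ β.root :=
      ⟨hφi, hψi, (hφr :).trans (hψr :).symm⟩
    funext v
    rcases hov : g.1 v with _ | a
    · by_cases hvr : v = β.root
      · subst hvr
        rw [Function.comp_apply, glueMap_root]
        exact (hφr.trans hψr.symm :)
      · rw [Function.comp_apply, glueMap_none g ⟨hvr, hov⟩]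
        rfl
    · rw [Function.comp_apply, glueMap_some g hov]
      rw [← hg] at hov
      exact ((mkGluing_some hc).mp hov).2
  refine Finset.sum_nbij' (fun p => Sum.elim p.1 (fun w => p.2 w.1))
    (fun χ => (χ ∘ Sum.inl, χ ∘ glueMap α β g)) ?_ ?_ ?_ ?_ ?_
  · intro p hp
    simp only [Finset.mem_filter, Finset.mem_univ, true_and] at hp ⊢
    obtain ⟨⟨⟨hφi, hφr⟩, hψi, hψr⟩, hg⟩ := hp
    have hc : Function.Injective p.1 ∧ Function.Injective p.2 ∧ p.1 α.root = p.2 β.root :=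
      ⟨hφi, hψi, hφr.trans hψr.symm⟩
    refine (@Finset.mem_filter _ _ _ _ _).mpr ⟨Finset.mem_univ _, ?_⟩
    constructor
    · intro x y hxy
      match x, y with
      | Sum.inl a, Sum.inl b => exact congrArg Sum.inl (hφi hxy)
      | Sum.inr w, Sum.inr w' =>
        exact congrArg Sum.inr (Subtype.ext (hψi hxy))
      | Sum.inl a, Sum.inr w =>
        exfalso
        have : (mkGluing α β p.1 p.2).1 w.1 = some a :=
          (mkGluing_some hc).mpr ⟨w.2.1, hxy⟩
        rw [hg] at this
        rw [w.2.2] at this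
        exact nomatch this
      | Sum.inr w, Sum.inl a =>
        exfalso
        have : (mkGluing α β p.1 p.2).1 w.1 = some a :=
          (mkGluing_some hc).mpr ⟨w.2.1, hxy.symm⟩
        rw [hg] at this
        rw [w.2.2] at this
        exact nomatch this
    · exact hφr
  · intro χ hχ
    simp only [Finset.mem_filter, Finset.mem_univ, true_and] at hχ ⊢
    obtain ⟨hχi, hχr⟩ := hχ
    have hinl : Function.Injective (χ ∘ Sum.inl) := hχi.comp Sum.inl_injective
    have hgm : Function.Injective (χ ∘ glueMap α β g) := hχi.comp (glueMap_inj α β g)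
    have hr2 : (χ ∘ glueMap α β g) β.root = i :=
      (congrArg χ (glueMap_root α β g)).trans hχr
    have hc : Function.Injective (χ ∘ Sum.inl) ∧ Function.Injective (χ ∘ glueMap α β g) ∧
        (χ ∘ Sum.inl) α.root = (χ ∘ glueMap α β g) β.root := by
      refine ⟨hinl, hgm, ?_⟩
      exact (congrArg χ (glueMap_root α β g)).symm
    refine ⟨⟨⟨hinl, hχr⟩, hgm, hr2⟩, ?_⟩
    apply Subtype.ext
    funext v
    rcases hov : g.1 v with _ | a
    · by_cases hvr : v = β.root
      · subst hvr
        exact (mkGluing α β (χ ∘ Sum.inl) (χ ∘ glueMap α β g)).2.1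
      · rcases ho : (mkGluing α β (χ ∘ Sum.inl) (χ ∘ glueMap α β g)).1 v with _ | a
        · rfl
        · exfalso
          have := ((mkGluing_some hc).mp ho).2
          replace this := this.trans (congrArg χ (glueMap_none g ⟨hvr, hov⟩))
          exact nomatch (hχi this)
    · refine (mkGluing_some hc).mpr ⟨?_, ?_⟩
      · intro hvr
        rw [hvr, g.2.1] at hov
        exact nomatch hov
      · exact (congrArg χ (glueMap_some g hov)).symm
  · intro p hp
    simp only [Finset.mem_filter, Finset.mem_univ, true_and] at hp
    obtain ⟨hC, hg⟩ := hp
    refine Prod.ext rfl ?_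
    exact hcomp p hC hg
  · intro χ hχ
    funext x
    cases x with
    | inl a => rfl
    | inr w =>
      have : glueMap α β g w.1 = Sum.inr w := by
        rw [glueMap_none g w.2]
      exact congrArg χ this
  · intro p hp
    simp only [Finset.mem_filter, Finset.mem_univ, true_and] at hp
    obtain ⟨hC, hg⟩ := hp
    refine Eq.trans ?_ (s10P_glueD A α β g _).symm
    have h1 : (Sum.elim p.1 (fun w : {w : β.V // w ≠ β.root ∧ g.1 w = none} => p.2 w.1)
        ∘ Sum.inl : α.V → Fin N) = p.1 := rfl
    exact congrArg₂ (· * ·) (congrArg (s10P A α) h1.symm) (congrArg (s10P A β) (hcomp p hC hg)).symm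

end S10Aux

section S10Dval

open Finset

lemma s10_count_map {V W : Type} [DecidableEq V] [DecidableEq W] {f : V → W}
    (hf : Function.Injective f) (s : Multiset (Sym2 V)) (e : Sym2 V) :
    (s.map (Sym2.map f)).count (Sym2.map f e) = s.count e :=
  Multiset.count_map_eq_count' _ _ (Sym2.map.injective hf) _

lemma s10_allE_plusD (α : Diagram) :
    (plusD α).allE = (α.allE.map (Sym2.map some) + {s((none : Option α.V), some α.root)}
      : Multiset (Sym2 (Option α.V))) := by
  simp only [Diagram.allE, plusD, Multiset.map_add]
  abel

lemma s10_none_notmem_map (α : Diagram) (s : Multiset (Sym2 α.V)) :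
    s((none : Option α.V), some α.root) ∉ s.map (Sym2.map some) := by
  intro hmem
  obtain ⟨e, -, he⟩ := Multiset.mem_map.mp hmem
  have hn : (none : Option α.V) ∈ Sym2.map some e := by
    rw [he]; exact Sym2.mem_mk_left _ _
  obtain ⟨a, -, ha⟩ := Sym2.mem_map.mp hn
  exact nomatch ha

lemma s10_count_plusD (α : Diagram) (e : Sym2 α.V) :
    ((plusD α).allE).count (Sym2.map some e) = α.allE.count e := by
  rw [s10_allE_plusD, Multiset.count_add, s10_count_map (Option.some_injective _),
    Multiset.count_singleton, if_neg, add_zero]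
  intro h
  have hn : (none : Option α.V) ∈ Sym2.map some e := by
    rw [h]; exact Sym2.mem_mk_left _ _
  obtain ⟨a, -, ha⟩ := Sym2.mem_map.mp hn
  exact nomatch ha

lemma s10_I_plusD (α : Diagram) :
    (plusD α).I = α.I.map ⟨some, Option.some_injective _⟩ := by
  ext x
  have hm : ∀ (t : Finset α.V) (y : (plusD α).V), @Membership.mem (plusD α).V
      (Finset (plusD α).V) _ (@Finset.map α.V (Option α.V) ⟨some, Option.some_injective _⟩ t) y ↔
      ∃ a ∈ t, some a = y := fun t y => Finset.mem_map
  simp only [Diagram.I, Finset.mem_filter, Finset.mem_univ, true_and, hm,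
    Function.Embedding.coeFn_mk]
  cases x with
  | none =>
    constructor
    · rintro ⟨hne, -⟩
      exact absurd rfl hne
    · rintro ⟨v, -, hv⟩
      exact nomatch hv
  | some w =>
    constructor
    · rintro ⟨hne, hcond⟩
      have hwroot : w ≠ α.root := by
        rintro rfl
        have hmem : s((none : Option α.V), some α.root) ∈ (plusD α).allE := by
          rw [s10_allE_plusD]
          exact Multiset.mem_add.mpr (Or.inr (Multiset.mem_singleton_self _))
        have hin : (some α.root : Option α.V) ∈ s((none : Option α.V), some α.root) :=
          Sym2.mem_mk_right _ _
        rcases hcond _ hmem hin with h2 | hdiag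
        · have hc1 : ((plusD α).allE).count s((none : Option α.V), some α.root) = 1 := by
            rw [s10_allE_plusD, Multiset.count_add, Multiset.count_singleton, if_pos rfl,
              Multiset.count_eq_zero_of_notMem (s10_none_notmem_map α _)]
          exact absurd (le_of_le_of_eq h2 hc1) (by norm_num)
        · replace hdiag := Sym2.mk_isDiag_iff.mp hdiag
          exact nomatch hdiag
      refine ⟨w, ⟨hwroot, ?_⟩, rfl⟩
      intro e he hwe
      have hmem : Sym2.map some e ∈ (plusD α).allE := by
        rw [s10_allE_plusD]
        exact Multiset.mem_add.mpr (Or.inl (Multiset.mem_map_of_mem _ he))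
      have hin : (some w : Option α.V) ∈ Sym2.map some e := Sym2.mem_map.mpr ⟨w, hwe, rfl⟩
      rcases hcond _ hmem hin with h2 | hdiag
      · left
        exact le_of_le_of_eq h2 (s10_count_plusD α e)
      · right
        exact (Sym2.isDiag_map (Option.some_injective _)).mp hdiag
    · rintro ⟨v, ⟨hvroot, hvcond⟩, hv⟩
      obtain rfl : v = w := Option.some.inj hv
      refine ⟨fun h => (nomatch h), ?_⟩
      intro E hE hwE
      rw [s10_allE_plusD] at hE
      replace hE := Multiset.mem_add.mp hE
      rcases hE with hE | hE
      · obtain ⟨e, he, rfl⟩ := Multiset.mem_map.mp hE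
        obtain ⟨u, hu, hus⟩ := Sym2.mem_map.mp hwE
        obtain rfl : u = v := Option.some.inj hus
        rcases hvcond e he hu with h2 | hdiag
        · left
          exact le_of_le_of_eq h2 (s10_count_plusD α e).symm
        · right
          exact (Sym2.isDiag_map (Option.some_injective _)).mpr hdiag
      · replace hE := Multiset.mem_singleton.mp hE
        subst hE
        replace hwE := Sym2.mem_iff.mp hwE
        rcases hwE with h | h
        · exact nomatch h
        · exact absurd (Option.some.inj h) hvroot

lemma s10_Dval_plusD (α : Diagram) : (plusD α).Dval = α.Dval := by
  have hV : Fintype.card (plusD α).V = Fintype.card α.V + 1 := by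
    calc Fintype.card (plusD α).V = Nat.card (plusD α).V := Nat.card_eq_fintype_card.symm
      _ = Nat.card (Option α.V) := rfl
      _ = Fintype.card (Option α.V) := Nat.card_eq_fintype_card
      _ = Fintype.card α.V + 1 := Fintype.card_option
  have hE : (plusD α).nE = α.nE + 1 := by
    simp only [Diagram.nE, plusD, Multiset.card_add, Multiset.card_map, Multiset.card_singleton]
    omega
  have hI : (plusD α).I.card = α.I.card := by
    rw [s10_I_plusD]; exact Finset.card_map _
  rw [Diagram.Dval, Diagram.Dval, hV, hE, hI]
  push_cast
  ring

lemma s10_allE_contractD (α : Diagram) (v : α.V) :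
    (contractD α v).allE = (α.allE + {s(α.root, v)} : Multiset (Sym2 α.V)) := by
  simp only [Diagram.allE, contractD]
  abel

lemma s10_I_contractD (α : Diagram) (v : α.V) :
    (contractD α v).I ⊆ insert α.root α.I := by
  intro w hw
  simp only [Diagram.I, Finset.mem_filter, Finset.mem_univ, true_and] at hw
  obtain ⟨hwv, hcond⟩ := hw
  by_cases hwr : w = α.root
  · exact Finset.mem_insert.mpr (Or.inl hwr)
  · refine Finset.mem_insert.mpr (Or.inr ?_)
    simp only [Diagram.I, Finset.mem_filter, Finset.mem_univ, true_and]
    refine s10_mem_filter_of (Finset.mem_univ _) ⟨hwr, fun e he hwe => ?_⟩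
    have hne : e ≠ s(α.root, v) := by
      rintro rfl
      replace hwe := Sym2.mem_iff.mp hwe
      rcases hwe with h | h
      · exact hwr h
      · exact hwv h
    have hmem : e ∈ (contractD α v).allE := by
      rw [s10_allE_contractD]
      exact Multiset.mem_add.mpr (Or.inl he)
    rcases hcond e hmem hwe with h2 | hd
    · left
      have hc : Multiset.count e (α.allE + {s(α.root, v)}) = Multiset.count e α.allE := by
        rw [Multiset.count_add, Multiset.count_singleton, if_neg hne, add_zero]
      rw [s10_allE_contractD] at h2
      exact le_of_le_of_eq h2 hc
    · right
      exact hd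

lemma s10_Dval_contractD (α : Diagram) (v : α.V) : (contractD α v).Dval ≤ α.Dval := by
  have hV : Fintype.card (contractD α v).V = Fintype.card α.V := rfl
  have hE : (contractD α v).nE = α.nE + 1 := by
    simp only [Diagram.nE, contractD, Multiset.card_add, Multiset.card_singleton]
    omega
  have hI : (contractD α v).I.card ≤ α.I.card + 1 :=
    le_trans (Finset.card_le_card (s10_I_contractD α v)) (Finset.card_insert_le _ _)
  have hI' : ((contractD α v).I.card : ℤ) ≤ (α.I.card : ℤ) + 1 := by exact_mod_cast hI
  rw [Diagram.Dval, Diagram.Dval, hV, hE]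
  push_cast
  linarith

lemma s10_allE_glueD (α β : Diagram) (g : Gluing α β) :
    (glueD α β g).allE
      = (α.allE.map (Sym2.map Sum.inl) + β.allE.map (Sym2.map (glueMap α β g))
      : Multiset (Sym2 (α.V ⊕ {w : β.V // w ≠ β.root ∧ g.1 w = none}))) := by
  simp only [Diagram.allE, glueD, Multiset.map_add]
  abel

lemma s10_Dval_glueD (α β : Diagram) (g : Gluing α β) :
    (glueD α β g).Dval ≤ α.Dval + β.Dval := by
  classical
  set U : Type := {w : β.V // w ≠ β.root ∧ g.1 w = none} with hU
  set Sm : Finset β.V := Finset.univ.filter (fun v => (g.1 v).isSome) with hSm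
  set T : Finset α.V := Finset.univ.filter (fun a => ∃ v, g.1 v = some a) with hT
  -- vertex count
  have hV : Fintype.card (glueD α β g).V = Fintype.card α.V + Nat.card U := by
    calc Fintype.card (glueD α β g).V = Nat.card (glueD α β g).V :=
          Nat.card_eq_fintype_card.symm
      _ = Nat.card (α.V ⊕ U) := rfl
      _ = Nat.card α.V + Nat.card U := Nat.card_sum
      _ = Fintype.card α.V + Nat.card U := by rw [Nat.card_eq_fintype_card]
  -- partition of the vertices of β
  have hpart : Nat.card U + Sm.card + 1 = Fintype.card β.V := by
    have h0 : Nat.card U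
        = (Finset.univ.filter (fun v : β.V => v ≠ β.root ∧ g.1 v = none)).card := by
      rw [Nat.card_eq_fintype_card, Fintype.card_subtype]
    have h1 : (Finset.univ.filter (fun v : β.V => v = β.root)).card
        + (Finset.univ.filter (fun v : β.V => ¬ v = β.root)).card = Fintype.card β.V := by
      rw [Finset.card_filter_add_card_filter_not, Finset.card_univ]
    have h2 : ((Finset.univ.filter (fun v : β.V => ¬ v = β.root)).filter
          (fun v => (g.1 v).isSome)).card
        + ((Finset.univ.filter (fun v : β.V => ¬ v = β.root)).filter
          (fun v => ¬ (g.1 v).isSome)).card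
        = (Finset.univ.filter (fun v : β.V => ¬ v = β.root)).card :=
      Finset.card_filter_add_card_filter_not _
    have h3 : (Finset.univ.filter (fun v : β.V => v = β.root)).card = 1 := by
      rw [Finset.filter_eq', if_pos (Finset.mem_univ _)]
      exact Finset.card_singleton _
    have h4 : (Finset.univ.filter (fun v : β.V => ¬ v = β.root)).filter
        (fun v => (g.1 v).isSome) = Sm := by
      ext v
      simp only [hSm, Finset.mem_filter, Finset.mem_univ, true_and]
      constructor
      · rintro ⟨-, h⟩; exact h
      · intro h
        refine ⟨?_, h⟩
        intro hv
        rw [hv, g.2.1] at h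
        exact nomatch h
    have h5 : (Finset.univ.filter (fun v : β.V => ¬ v = β.root)).filter
        (fun v => ¬ (g.1 v).isSome)
        = Finset.univ.filter (fun v : β.V => v ≠ β.root ∧ g.1 v = none) := by
      ext v
      simp only [Finset.mem_filter, Finset.mem_univ, true_and, Option.not_isSome_iff_eq_none,
        ne_eq]
    rw [h4, h5] at h2
    rw [h0]
    omega
  -- edge count
  have hE : (glueD α β g).nE = α.nE + β.nE := by
    simp only [Diagram.nE, glueD, Multiset.card_add, Multiset.card_map]
    ring
  -- T is not larger than Sm
  have hTS : T.card ≤ Sm.card := by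
    apply Finset.card_le_card_of_injOn
      (fun a => if h : ∃ v, g.1 v = some a then h.choose else β.root)
    · intro a ha
      simp only [hT, Finset.mem_coe, Finset.mem_filter, Finset.mem_univ, true_and] at ha
      simp only [dif_pos ha]
      simp only [hSm, Finset.mem_coe, Finset.mem_filter, Finset.mem_univ, true_and]
      rw [ha.choose_spec]
      rfl
    · intro a ha b hb hab
      simp only [hT, Finset.coe_filter, Set.mem_setOf_eq, Finset.mem_univ, true_and] at ha hb
      have e1 : (fun a => if h : ∃ v, g.1 v = some a then h.choose else β.root) a
          = ha.choose := dif_pos ha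
      have e2 : (fun a => if h : ∃ v, g.1 v = some a then h.choose else β.root) b
          = hb.choose := dif_pos hb
      rw [e1, e2] at hab
      have h1 := ha.choose_spec
      have h2 := hb.choose_spec
      rw [hab, h2] at h1
      exact Option.some.inj h1.symm
  -- bound on I
  have hIγ : (glueD α β g).I.card ≤ α.I.card + T.card + β.I.card := by
    have hsplit : ((glueD α β g).I.filter (fun x => x.isLeft)).card
        + ((glueD α β g).I.filter (fun x => ¬ x.isLeft)).card = (glueD α β g).I.card :=
      Finset.card_filter_add_card_filter_not _
    have hleft : ((glueD α β g).I.filter (fun x => x.isLeft)).card ≤ (α.I ∪ T).card := by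
      apply Finset.card_le_card_of_injOn (fun x => x.elim id (fun _ => α.root))
      · intro x hx
        simp only [Finset.mem_coe, Finset.mem_filter] at hx
        obtain ⟨hxI, hxl⟩ := hx
        obtain ⟨a, rfl⟩ := Sum.isLeft_iff.mp hxl
        simp only [Sum.elim_inl, id]
        by_cases haT : a ∈ T
        · exact Finset.mem_union_right _ haT
        refine Finset.mem_union_left _ ?_
        simp only [Diagram.I, Finset.mem_filter, Finset.mem_univ, true_and] at hxI ⊢
        obtain ⟨-, hxr, hcond⟩ := (@Finset.mem_filter _ _ _ _ _).mp hxI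
        have haroot : a ≠ α.root := fun h => hxr (by rw [h]; rfl)
        refine ⟨haroot, fun e he hae => ?_⟩
        have hmem : Sym2.map Sum.inl e ∈ (glueD α β g).allE := by
          rw [s10_allE_glueD]
          exact Multiset.mem_add.mpr (Or.inl (Multiset.mem_map_of_mem _ he))
        have hin : (Sum.inl a : (glueD α β g).V) ∈ Sym2.map Sum.inl e :=
          Sym2.mem_map.mpr ⟨a, hae, rfl⟩
        have hz : Sym2.map Sum.inl e ∉ β.allE.map (Sym2.map (glueMap α β g)) := by
          intro hmem'
          obtain ⟨e', -, he'⟩ := Multiset.mem_map.mp hmem'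
          have hin' : Sum.inl a ∈ Sym2.map (glueMap α β g) e' := by
            rw [he']
            exact Sym2.mem_map.mpr ⟨a, hae, rfl⟩
          obtain ⟨v, -, hv⟩ := Sym2.mem_map.mp hin'
          rcases hov : g.1 v with _ | b
          · by_cases hvr : v = β.root
            · rw [hvr, glueMap_root] at hv
              exact haroot (Sum.inl.inj hv).symm
            · rw [glueMap_none g ⟨hvr, hov⟩] at hv
              exact nomatch hv
          · rw [glueMap_some g hov] at hv
            have hba : b = a := Sum.inl.inj hv
            subst hba
            refine absurd ?_ haT
            simp only [hT, Finset.mem_filter, Finset.mem_univ, true_and]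
            exact ⟨v, hov⟩
        have hcnt : Multiset.count (Sym2.map Sum.inl e)
            (α.allE.map (Sym2.map Sum.inl) + β.allE.map (Sym2.map (glueMap α β g)))
            = Multiset.count e α.allE := by
          rw [Multiset.count_add, s10_count_map Sum.inl_injective,
            Multiset.count_eq_zero_of_notMem hz, add_zero]
        rcases hcond _ hmem hin with h2 | hdiag
        · left
          refine le_trans h2 (le_of_eq ?_)
          rw [s10_allE_glueD]
          exact hcnt
        · right
          exact (Sym2.isDiag_map Sum.inl_injective).mp hdiag
      · intro x hx y hy hxy
        simp only [Finset.coe_filter, Set.mem_setOf_eq] at hx hy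
        obtain ⟨a, rfl⟩ := Sum.isLeft_iff.mp hx.2
        obtain ⟨b, rfl⟩ := Sum.isLeft_iff.mp hy.2
        exact congrArg Sum.inl (by simpa using hxy)
    have hright : ((glueD α β g).I.filter (fun x => ¬ x.isLeft)).card ≤ β.I.card := by
      apply Finset.card_le_card_of_injOn (fun x => x.elim (fun _ => β.root) (fun w => w.1))
      · intro x hx
        simp only [Finset.mem_coe, Finset.mem_filter] at hx
        obtain ⟨hxI, hxr⟩ := hx
        replace hxr := Sum.not_isLeft.mp hxr
        obtain ⟨w, rfl⟩ := Sum.isRight_iff.mp hxr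
        simp only [Sum.elim_inr]
        simp only [Diagram.I, Finset.mem_filter, Finset.mem_univ, true_and] at hxI ⊢
        obtain ⟨-, -, hcond⟩ := (@Finset.mem_filter _ _ _ _ _).mp hxI
        refine s10_mem_filter_of (Finset.mem_univ _) ⟨w.2.1, fun e he hwe => ?_⟩
        have hmem : Sym2.map (glueMap α β g) e ∈ (glueD α β g).allE := by
          rw [s10_allE_glueD]
          exact Multiset.mem_add.mpr (Or.inr (Multiset.mem_map_of_mem _ he))
        have hgm : glueMap α β g w.1 = Sum.inr w := glueMap_none g w.2
        have hin : (Sum.inr w : (glueD α β g).V) ∈ Sym2.map (glueMap α β g) e :=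
          Sym2.mem_map.mpr ⟨w.1, hwe, hgm⟩
        have hz : Sym2.map (glueMap α β g) e ∉ α.allE.map (Sym2.map Sum.inl) := by
          intro hmem'
          obtain ⟨e', -, he'⟩ := Multiset.mem_map.mp hmem'
          have hin' : Sum.inr w ∈ Sym2.map Sum.inl e' := by
            rw [he']
            exact Sym2.mem_map.mpr ⟨w.1, hwe, hgm⟩
          obtain ⟨u, -, hu⟩ := Sym2.mem_map.mp hin'
          exact nomatch hu
        have hcnt : Multiset.count (Sym2.map (glueMap α β g) e)
            (α.allE.map (Sym2.map Sum.inl) + β.allE.map (Sym2.map (glueMap α β g)))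
            = Multiset.count e β.allE := by
          rw [Multiset.count_add, s10_count_map (glueMap_inj α β g),
            Multiset.count_eq_zero_of_notMem hz, zero_add]
        rcases hcond _ hmem hin with h2 | hdiag
        · left
          refine le_trans h2 (le_of_eq ?_)
          rw [s10_allE_glueD]
          exact hcnt
        · right
          exact (Sym2.isDiag_map (glueMap_inj α β g)).mp hdiag
      · intro x hx y hy hxy
        simp only [Finset.coe_filter, Set.mem_setOf_eq, Sum.not_isLeft] at hx hy
        obtain ⟨w, rfl⟩ := Sum.isRight_iff.mp (Sum.not_isLeft.mp hx.2)
        obtain ⟨w', rfl⟩ := Sum.isRight_iff.mp (Sum.not_isLeft.mp hy.2)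
        simp only [Sum.elim_inr] at hxy
        rw [Subtype.ext hxy]
    have hunion : (α.I ∪ T).card ≤ α.I.card + T.card := Finset.card_union_le _ _
    omega
  -- final arithmetic
  have hIβ : (glueD α β g).I.card ≤ α.I.card + Sm.card + β.I.card := by omega
  rw [Diagram.Dval, Diagram.Dval, Diagram.Dval, hV, hE]
  have e1 : (Nat.card U : ℤ) = (Fintype.card β.V : ℤ) - 1 - (Sm.card : ℤ) := by
    have := hpart
    push_cast [← this]
    ring
  have e2 : ((glueD α β g).I.card : ℤ) ≤ (α.I.card : ℤ) + (Sm.card : ℤ) + (β.I.card : ℤ) := by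
    exact_mod_cast hIβ
  push_cast
  linarith

end S10Dval

section S10Main

open Finset

/-! #### Coefficient estimates -/

lemma s10_theta_mul {a b : ℕ → ℝ} {j k : ℕ} (ha : IsThetaHalf a j) (hb : IsThetaHalf b k) :
    IsThetaHalf (fun n => a n * b n) (j + k) := by
  obtain ⟨c₁, c₂, hc₁, hc₂, h⟩ := ha
  obtain ⟨d₁, d₂, hd₁, hd₂, h'⟩ := hb
  refine ⟨c₁ * d₁, c₂ * d₂, by positivity, by positivity, fun n hn => ?_⟩
  have hnp : (0:ℝ) < (n : ℝ) := by
    have : (1:ℝ) ≤ (n:ℝ) := by exact_mod_cast hn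
    linarith
  have hxy : ((n:ℝ)) ^ (-(↑(j+k):ℝ)/2) = (n:ℝ) ^ (-(j:ℝ)/2) * (n:ℝ) ^ (-(k:ℝ)/2) := by
    rw [← Real.rpow_add hnp]
    congr 1
    push_cast
    ring
  obtain ⟨h1, h2⟩ := h n hn
  obtain ⟨h1', h2'⟩ := h' n hn
  constructor
  · calc c₁ * d₁ * ((n:ℝ) ^ (-(↑(j+k):ℝ)/2))
        = (c₁ * (n:ℝ) ^ (-(j:ℝ)/2)) * (d₁ * (n:ℝ) ^ (-(k:ℝ)/2)) := by rw [hxy]; ring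
      _ ≤ |a n| * |b n| :=
          mul_le_mul h1 h1' (by positivity) (abs_nonneg _)
      _ = |a n * b n| := (abs_mul _ _).symm
  · calc |a n * b n| = |a n| * |b n| := abs_mul _ _
      _ ≤ (c₂ * (n:ℝ) ^ (-(j:ℝ)/2)) * (d₂ * (n:ℝ) ^ (-(k:ℝ)/2)) :=
          mul_le_mul h2 h2' (abs_nonneg _) (by positivity)
      _ = c₂ * d₂ * ((n:ℝ) ^ (-(↑(j+k):ℝ)/2)) := by rw [hxy]; ring

lemma s10_theta_const {c : ℝ} (hc : c ≠ 0) : IsThetaHalf (fun _ => c) 0 := by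
  refine ⟨|c|, |c|, abs_pos.mpr hc, abs_pos.mpr hc, fun n hn => ?_⟩
  have h0 : ((n:ℝ)) ^ (-((0:ℕ):ℝ)/2) = 1 := by
    norm_num
  rw [h0, mul_one]
  exact ⟨le_refl _, le_refl _⟩

/-- A term whose combinatorial degree exceeds the decay of its coefficient by at most `d`. -/
def TermDegLE (p : (ℕ → ℝ) × Diagram) (d : ℤ) : Prop :=
  (∀ n, p.1 n = 0) ∨ ∃ j : ℕ, IsThetaHalf p.1 j ∧ p.2.Dval ≤ (j : ℤ) + d

lemma s10_neg_iff (p : (ℕ → ℝ) × Diagram) : NegligibleTerm p.1 p.2 ↔ TermDegLE p (-1) := by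
  unfold NegligibleTerm TermDegLE
  constructor
  · rintro (h | ⟨j, hj, hd⟩)
    · exact Or.inl h
    · exact Or.inr ⟨j, hj, by linarith⟩
  · rintro (h | ⟨j, hj, hd⟩)
    · exact Or.inl h
    · exact Or.inr ⟨j, hj, by linarith⟩

lemma s10_orderle1_deg (p : (ℕ → ℝ) × Diagram) (h : TermOrderLE1 p) : TermDegLE p 0 := by
  rcases h with h | h
  · rcases h with h | ⟨j, hj, hd⟩
    · exact Or.inl h
    · exact Or.inr ⟨j, hj, by linarith⟩
  · obtain ⟨j, hj, hd⟩ := h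
    exact Or.inr ⟨j, hj, by omega⟩

/-! #### The diagram expression for `A · x` -/

def AmulTerm (p : (ℕ → ℝ) × Diagram) : DiagExpr :=
  (p.1, plusD p.2) :: (Finset.univ.toList.map fun v : p.2.V => (p.1, contractD p.2 v))

def AmulExpr (z : DiagExpr) : DiagExpr := z.flatMap AmulTerm

lemma s10_eval_cons {N : ℕ} (p : (ℕ → ℝ) × Diagram) (z : DiagExpr)
    (A : Matrix (Fin N) (Fin N) ℝ) (i : Fin N) :
    DiagExpr.eval (p :: z) A i = p.1 N * Zv A p.2 i + DiagExpr.eval z A i := by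
  simp [DiagExpr.eval]

lemma s10_eval_append {N : ℕ} (x y : DiagExpr) (A : Matrix (Fin N) (Fin N) ℝ) (i : Fin N) :
    DiagExpr.eval (x ++ y) A i = DiagExpr.eval x A i + DiagExpr.eval y A i := by
  simp [DiagExpr.eval]

lemma s10_eval_AmulExpr (z : DiagExpr) {N : ℕ} (A : Matrix (Fin N) (Fin N) ℝ)
    (hA : A.IsSymm) (i : Fin N) :
    DiagExpr.eval (AmulExpr z) A i = ∑ r, A i r * DiagExpr.eval z A r := by
  induction z with
  | nil => simp [AmulExpr, DiagExpr.eval]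
  | cons p z ih =>
    have hsplit : AmulExpr (p :: z) = AmulTerm p ++ AmulExpr z := rfl
    rw [hsplit, s10_eval_append, ih]
    have hterm : DiagExpr.eval (AmulTerm p) A i = p.1 N * ∑ r, A i r * Zv A p.2 r := by
      rw [s10_Zv_mulVec A hA]
      unfold AmulTerm
      rw [s10_eval_cons]
      have hl : DiagExpr.eval (Finset.univ.toList.map
            fun v : p.2.V => (p.1, contractD p.2 v)) A i
          = ∑ v : p.2.V, p.1 N * Zv A (contractD p.2 v) i := by
        unfold DiagExpr.eval
        rw [List.map_map]
        exact Finset.sum_map_toList _ _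
      rw [hl]
      simp only [mul_add, Finset.mul_sum]
    rw [hterm]
    rw [Finset.mul_sum, ← Finset.sum_add_distrib]
    refine Finset.sum_congr rfl fun r _ => ?_
    rw [s10_eval_cons]
    ring

lemma s10_mem_AmulExpr {z : DiagExpr} {r : (ℕ → ℝ) × Diagram} (hr : r ∈ AmulExpr z) :
    ∃ p ∈ z, r = (p.1, plusD p.2) ∨ ∃ v : p.2.V, r = (p.1, contractD p.2 v) := by
  obtain ⟨p, hp, hr'⟩ := List.mem_flatMap.mp hr
  refine ⟨p, hp, ?_⟩
  rcases List.mem_cons.mp hr' with h | h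
  · exact Or.inl h
  · obtain ⟨v, -, hv⟩ := List.mem_map.mp h
    exact Or.inr ⟨v, hv.symm⟩

lemma s10_deg_AmulExpr {z : DiagExpr} (hz : ∀ p ∈ z, TermDegLE p (-1)) :
    ∀ r ∈ AmulExpr z, TermDegLE r (-1) := by
  intro r hr
  obtain ⟨p, hp, hcase⟩ := s10_mem_AmulExpr hr
  rcases hz p hp with h0 | ⟨j, hj, hd⟩
  · left
    rcases hcase with h | ⟨v, h⟩ <;> (subst h; exact h0)
  · right
    refine ⟨j, ?_, ?_⟩
    · rcases hcase with h | ⟨v, h⟩ <;> (subst h; exact hj)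
    · rcases hcase with h | ⟨v, h⟩ <;> subst h
      · simpa [s10_Dval_plusD] using hd
      · exact le_trans (s10_Dval_contractD p.2 v) hd

/-! #### The diagram expression for componentwise products -/

def glueTerm (p q : (ℕ → ℝ) × Diagram) : DiagExpr :=
  (Finset.univ : Finset (Gluing p.2 q.2)).toList.map
    fun g => ((fun n => p.1 n * q.1 n), glueD p.2 q.2 g)

def mulExpr (x y : DiagExpr) : DiagExpr := x.flatMap fun p => y.flatMap fun q => glueTerm p q

lemma s10_eval_glueTerm {N : ℕ} (p q : (ℕ → ℝ) × Diagram) (A : Matrix (Fin N) (Fin N) ℝ)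
    (i : Fin N) :
    DiagExpr.eval (glueTerm p q) A i = (p.1 N * Zv A p.2 i) * (q.1 N * Zv A q.2 i) := by
  unfold DiagExpr.eval glueTerm
  rw [List.map_map, Finset.sum_map_toList]
  have : ∑ g : Gluing p.2 q.2, (p.1 N * q.1 N) * Zv A (glueD p.2 q.2 g) i
      = (p.1 N * q.1 N) * ∑ g : Gluing p.2 q.2, Zv A (glueD p.2 q.2 g) i := by
    rw [Finset.mul_sum]
  simp only [Function.comp_def]
  rw [this, ← s10_Zv_glue]
  ring

lemma s10_eval_flat {N : ℕ} (p : (ℕ → ℝ) × Diagram) (y : DiagExpr)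
    (A : Matrix (Fin N) (Fin N) ℝ) (i : Fin N) :
    DiagExpr.eval (y.flatMap fun q => glueTerm p q) A i
      = (p.1 N * Zv A p.2 i) * DiagExpr.eval y A i := by
  induction y with
  | nil => simp [DiagExpr.eval]
  | cons q y ih =>
    have hsplit : ((q :: y).flatMap fun q' => glueTerm p q')
        = glueTerm p q ++ (y.flatMap fun q' => glueTerm p q') := rfl
    rw [hsplit, s10_eval_append, ih, s10_eval_glueTerm, s10_eval_cons]
    ring

lemma s10_eval_mulExpr {N : ℕ} (x y : DiagExpr) (A : Matrix (Fin N) (Fin N) ℝ) (i : Fin N) :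
    DiagExpr.eval (mulExpr x y) A i = DiagExpr.eval x A i * DiagExpr.eval y A i := by
  induction x with
  | nil => simp [mulExpr, DiagExpr.eval]
  | cons p x ih =>
    have hsplit : mulExpr (p :: x) y
        = (y.flatMap fun q => glueTerm p q) ++ mulExpr x y := rfl
    rw [hsplit, s10_eval_append, ih, s10_eval_flat, s10_eval_cons]
    ring

lemma s10_mem_mulExpr {x y : DiagExpr} {r : (ℕ → ℝ) × Diagram} (hr : r ∈ mulExpr x y) :
    ∃ p ∈ x, ∃ q ∈ y, ∃ g : Gluing p.2 q.2,
      r = ((fun n => p.1 n * q.1 n), glueD p.2 q.2 g) := by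
  obtain ⟨p, hp, hr1⟩ := List.mem_flatMap.mp hr
  obtain ⟨q, hq, hr2⟩ := List.mem_flatMap.mp hr1
  obtain ⟨g, -, hg⟩ := List.mem_map.mp hr2
  exact ⟨p, hp, q, hq, g, hg.symm⟩

lemma s10_deg_mulExpr {x y : DiagExpr} {d₁ d₂ : ℤ}
    (hx : ∀ p ∈ x, TermDegLE p d₁) (hy : ∀ q ∈ y, TermDegLE q d₂) :
    ∀ r ∈ mulExpr x y, TermDegLE r (d₁ + d₂) := by
  intro r hr
  obtain ⟨p, hp, q, hq, g, rfl⟩ := s10_mem_mulExpr hr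
  rcases hx p hp with h0 | ⟨j, hj, hd⟩
  · left; intro n; simp [h0 n]
  rcases hy q hq with h0 | ⟨k, hk, hd'⟩
  · left; intro n; simp [h0 n]
  right
  refine ⟨j + k, s10_theta_mul hj hk, ?_⟩
  have := s10_Dval_glueD p.2 q.2 g
  push_cast
  linarith

/-! #### The constant expression -/

lemma s10_Zv_singleton {N : ℕ} (A : Matrix (Fin N) (Fin N) ℝ) (i : Fin N) :
    Zv A singletonD i = 1 := by
  have hinj : ∀ φ : PUnit.{1} → Fin N, Function.Injective φ :=
    fun φ a b _ => Subsingleton.elim a b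
  rw [s10_Zv_eq]
  refine Eq.trans (Fintype.sum_equiv (Equiv.funUnique PUnit.{1} (Fin N)) _
    (fun r => if r = i then (1:ℝ) else 0) (fun φ => ?_)) ?_
  · by_cases h : φ PUnit.unit = i
    · simp [s10P, singletonD, h, hinj φ, Equiv.funUnique]
    · simp [s10P, singletonD, h, Equiv.funUnique]
  · rw [Finset.sum_ite_eq']
    simp

def constE (c : ℝ) : DiagExpr := [((fun _ => c), singletonD)]

lemma s10_eval_constE {N : ℕ} (c : ℝ) (A : Matrix (Fin N) (Fin N) ℝ) (i : Fin N) :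
    DiagExpr.eval (constE c) A i = c := by
  simp [DiagExpr.eval, constE, s10_Zv_singleton]

lemma s10_deg_constE (c : ℝ) : ∀ p ∈ constE c, TermDegLE p 0 := by
  intro p hp
  rw [constE, List.mem_singleton] at hp
  subst hp
  by_cases hc : c = 0
  · left; intro n; exact hc
  · right
    refine ⟨0, s10_theta_const hc, ?_⟩
    have : singletonD.Dval = 0 := by
      simp [Diagram.Dval, Diagram.nE, Diagram.I, singletonD]
      decide
    simp [this]

/-! #### The main closure relation -/

def S10R (x y : DiagExpr) : Prop :=
  (∀ p ∈ x, TermDegLE p 0) ∧ (∀ p ∈ y, TermDegLE p 0) ∧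
  ∃ z : DiagExpr, (∀ p ∈ z, TermDegLE p (-1)) ∧
    ∀ (N : ℕ) (A : Matrix (Fin N) (Fin N) ℝ), A.IsSymm → ∀ i : Fin N,
      DiagExpr.eval x A i - DiagExpr.eval y A i = DiagExpr.eval z A i

lemma S10R_append {x y x' y' : DiagExpr} (h : S10R x y) (h' : S10R x' y') :
    S10R (x ++ x') (y ++ y') := by
  obtain ⟨hx, hy, z, hz, hid⟩ := h
  obtain ⟨hx', hy', z', hz', hid'⟩ := h'
  refine ⟨?_, ?_, z ++ z', ?_, ?_⟩
  · intro p hp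
    rcases List.mem_append.mp hp with h | h
    · exact hx p h
    · exact hx' p h
  · intro p hp
    rcases List.mem_append.mp hp with h | h
    · exact hy p h
    · exact hy' p h
  · intro p hp
    rcases List.mem_append.mp hp with h | h
    · exact hz p h
    · exact hz' p h
  · intro N A hA i
    rw [s10_eval_append, s10_eval_append, s10_eval_append]
    have e1 := hid N A hA i
    have e2 := hid' N A hA i
    linarith

lemma S10R_mul {x y x' y' : DiagExpr} (h : S10R x y) (h' : S10R x' y') :
    S10R (mulExpr x x') (mulExpr y y') := by
  obtain ⟨hx, hy, z, hz, hid⟩ := h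
  obtain ⟨hx', hy', z', hz', hid'⟩ := h'
  refine ⟨?_, ?_, mulExpr x z' ++ mulExpr z y', ?_, ?_⟩
  · have := s10_deg_mulExpr hx hx'
    simpa using this
  · have := s10_deg_mulExpr hy hy'
    simpa using this
  · intro p hp
    rcases List.mem_append.mp hp with h | h
    · have := s10_deg_mulExpr hx hz' p h
      simpa using this
    · have := s10_deg_mulExpr hz hy' p h
      simpa using this
  · intro N A hA i
    rw [s10_eval_append, s10_eval_mulExpr, s10_eval_mulExpr, s10_eval_mulExpr,
      s10_eval_mulExpr]
    have e1 := hid N A hA i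
    have e2 := hid' N A hA i
    rw [← e1, ← e2]
    ring

lemma S10R_const (c : ℝ) : S10R (constE c) (constE c) :=
  ⟨s10_deg_constE c, s10_deg_constE c, [], by simp, fun N A _ i => by
    simp [DiagExpr.eval]⟩

/-! #### Polynomials of diagram expressions -/

lemma s10_poly {t : ℕ} (x y : Fin t → DiagExpr)
    (hx : ∀ s, ∀ p ∈ x s, TermDegLE p 0) (hy : ∀ s, ∀ p ∈ y s, TermDegLE p 0)
    (hxy : ∀ s, ∃ z : DiagExpr, (∀ p ∈ z, TermDegLE p (-1)) ∧
      ∀ (N : ℕ) (A : Matrix (Fin N) (Fin N) ℝ), A.IsSymm → ∀ i : Fin N,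
        DiagExpr.eval (x s) A i - DiagExpr.eval (y s) A i = DiagExpr.eval z A i)
    (f : MvPolynomial (Fin t) ℝ) :
    ∃ xf yf : DiagExpr, S10R xf yf ∧
      (∀ (N : ℕ) (A : Matrix (Fin N) (Fin N) ℝ) (i : Fin N),
        MvPolynomial.eval (fun s => DiagExpr.eval (x s) A i) f = DiagExpr.eval xf A i) ∧
      (∀ (N : ℕ) (A : Matrix (Fin N) (Fin N) ℝ) (i : Fin N),
        MvPolynomial.eval (fun s => DiagExpr.eval (y s) A i) f = DiagExpr.eval yf A i) := by
  induction f using MvPolynomial.induction_on with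
  | C a =>
    exact ⟨constE a, constE a, S10R_const a,
      fun N A i => by simp [s10_eval_constE],
      fun N A i => by simp [s10_eval_constE]⟩
  | add p q hp hq =>
    obtain ⟨xp, yp, hRp, hexp, heyp⟩ := hp
    obtain ⟨xq, yq, hRq, hexq, heyq⟩ := hq
    refine ⟨xp ++ xq, yp ++ yq, S10R_append hRp hRq, ?_, ?_⟩
    · intro N A i
      rw [s10_eval_append, MvPolynomial.eval_add, hexp N A i, hexq N A i]
    · intro N A i
      rw [s10_eval_append, MvPolynomial.eval_add, heyp N A i, heyq N A i]
  | mul_X p s hp =>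
    obtain ⟨xp, yp, hRp, hexp, heyp⟩ := hp
    have hRs : S10R (x s) (y s) := ⟨hx s, hy s, hxy s⟩
    refine ⟨mulExpr xp (x s), mulExpr yp (y s), S10R_mul hRp hRs, ?_, ?_⟩
    · intro N A i
      rw [MvPolynomial.eval_mul, MvPolynomial.eval_X, s10_eval_mulExpr, hexp N A i]
    · intro N A i
      rw [MvPolynomial.eval_mul, MvPolynomial.eval_X, s10_eval_mulExpr, heyp N A i]

end S10Main

/-- asymptotic equality is preserved by multiplication by `A` and by
componentwise polynomials, for diagram expressions of combinatorial order at most 1. -/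
theorem statement_10 :
    (∀ x y : DiagExpr, (∀ p ∈ x, TermOrderLE1 p) → (∀ p ∈ y, TermOrderLE1 p) →
      AsympEqE x y →
        AsympEqV (fun _ A i => A.mulVec (fun r => DiagExpr.eval x A r) i)
          (fun _ A i => A.mulVec (fun r => DiagExpr.eval y A r) i)) ∧
    (∀ (t : ℕ) (x y : Fin t → DiagExpr),
      (∀ s, ∀ p ∈ x s, TermOrderLE1 p) → (∀ s, ∀ p ∈ y s, TermOrderLE1 p) →
      (∀ s, AsympEqE (x s) (y s)) →
      ∀ f : MvPolynomial (Fin t) ℝ,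
        AsympEqV (fun _ A i => MvPolynomial.eval (fun s => DiagExpr.eval (x s) A i) f)
          (fun _ A i => MvPolynomial.eval (fun s => DiagExpr.eval (y s) A i) f)) := by
  constructor
  · intro x y _hx _hy hxy
    obtain ⟨z, hz, hid⟩ := hxy
    have hz' : ∀ p ∈ z, TermDegLE p (-1) := fun p hp => (s10_neg_iff p).mp (hz p hp)
    refine ⟨AmulExpr z, ?_, ?_⟩
    · intro p hp
      exact (s10_neg_iff p).mpr (s10_deg_AmulExpr hz' p hp)
    · intro N A hA i
      show A.mulVec (fun r => DiagExpr.eval x A r) i - A.mulVec (fun r => DiagExpr.eval y A r) i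
        = DiagExpr.eval (AmulExpr z) A i
      rw [s10_eval_AmulExpr z A hA i]
      simp only [Matrix.mulVec, dotProduct]
      rw [← Finset.sum_sub_distrib]
      refine Finset.sum_congr rfl fun r _ => ?_
      rw [← mul_sub, hid N A hA r]
  · intro t x y hx hy hxy f
    have hx' : ∀ s, ∀ p ∈ x s, TermDegLE p 0 :=
      fun s p hp => s10_orderle1_deg p (hx s p hp)
    have hy' : ∀ s, ∀ p ∈ y s, TermDegLE p 0 :=
      fun s p hp => s10_orderle1_deg p (hy s p hp)
    have hxy' : ∀ s, ∃ z : DiagExpr, (∀ p ∈ z, TermDegLE p (-1)) ∧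
        ∀ (N : ℕ) (A : Matrix (Fin N) (Fin N) ℝ), A.IsSymm → ∀ i : Fin N,
          DiagExpr.eval (x s) A i - DiagExpr.eval (y s) A i = DiagExpr.eval z A i := by
      intro s
      obtain ⟨z, hz, hid⟩ := hxy s
      exact ⟨z, fun p hp => (s10_neg_iff p).mp (hz p hp), hid⟩
    obtain ⟨xf, yf, ⟨-, -, z, hz, hdiff⟩, hex, hey⟩ := s10_poly x y hx' hy' hxy' f
    refine ⟨z, fun p hp => (s10_neg_iff p).mpr (hz p hp), ?_⟩
    intro N A hA i
    show MvPolynomial.eval (fun s => DiagExpr.eval (x s) A i) f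
        - MvPolynomial.eval (fun s => DiagExpr.eval (y s) A i) f = DiagExpr.eval z A i
    rw [hex N A i, hey N A i]
    exact hdiff N A hA i
end
end

section
/- Let α be a Fourier diagram with a hanging double edge: an unlabeled double edge {u, v} in which v is a non-root vertex of degree exactly 2. Let α₀ be α with the double edge and the vertex v removed, and α₂ be α with the double edge replaced by a single 2-labeled edge. Then for every n and every symmetric matrix A ∈ ℝ^{n×n}, Z_α = Z_{α₀} − ((|V(α)| − 1)/n)·Z_{α₀} + Z_{α₂} (as an identity of vectors in ℝⁿ). -/
set_option linter.unusedVariables false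

open scoped Classical BigOperators

noncomputable section

open MeasureTheory ProbabilityTheory Filter

/-! ### Auxiliary lemmas for Statement 11 -/

lemma sym2val_congr_s11 {N : ℕ} (A : Matrix (Fin N) (Fin N) ℝ) {V : Type}
    {φ φ' : V → Fin N} (e : Sym2 V) (h : ∀ w ∈ e, φ w = φ' w) :
    sym2val A φ e = sym2val A φ' e := by
  induction e using Sym2.ind with
  | _ a b =>
    simp only [sym2val, Sym2.lift_mk]
    rw [h a (Sym2.mem_mk_left a b), h b (Sym2.mem_mk_right a b)]

lemma sym2val_map_s11 {N : ℕ} (A : Matrix (Fin N) (Fin N) ℝ) {V W : Type}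
    (g : V → W) (ψ : W → Fin N) (e : Sym2 V) :
    sym2val A ψ (Sym2.map g e) = sym2val A (ψ ∘ g) e := by
  induction e using Sym2.ind with
  | _ a b => simp [sym2val]

/-- The product over the remaining edges and the 2-labeled edges. -/
def s11PQ {N : ℕ} (A : Matrix (Fin N) (Fin N) ℝ) (α : Diagram)
    (E₀ : Multiset (Sym2 α.V)) (φ : α.V → Fin N) : ℝ :=
  (E₀.map (sym2val A φ)).prod *
    (α.edges2.map fun e => sym2val A φ e ^ 2 - 1 / (N : ℝ)).prod

lemma s11PQ_congr {N : ℕ} (A : Matrix (Fin N) (Fin N) ℝ) {α : Diagram} {v : α.V}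
    {E₀ : Multiset (Sym2 α.V)} (hE : ∀ e ∈ E₀, v ∉ e) (hE2 : ∀ e ∈ α.edges2, v ∉ e)
    {φ φ' : α.V → Fin N} (h : ∀ w, w ≠ v → φ w = φ' w) :
    s11PQ A α E₀ φ = s11PQ A α E₀ φ' := by
  unfold s11PQ
  congr 1
  · congr 1
    refine Multiset.map_congr rfl fun e he => ?_
    exact sym2val_congr_s11 A e fun w hw => h w (fun hwv => hE e he (hwv ▸ hw))
  · congr 1
    refine Multiset.map_congr rfl fun e he => ?_
    rw [sym2val_congr_s11 A e fun w hw => h w (fun hwv => hE2 e he (hwv ▸ hw))]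

lemma s11_inj_iff {X : Type} [DecidableEq X] {v : X} {N : ℕ} (x : Fin N)
    (ψ : {w : X // w ≠ v} → Fin N) :
    Function.Injective ((Equiv.funSplitAt v (Fin N)).symm (x, ψ)) ↔
      Function.Injective ψ ∧ x ∉ Set.range ψ := by
  set F := (Equiv.funSplitAt v (Fin N)).symm (x, ψ) with hF
  have hFv : F v = x := by simp [hF, Equiv.funSplitAt_symm_apply]
  have hFne : ∀ (w : X) (h : w ≠ v), F w = ψ ⟨w, h⟩ := fun w h => by
    simp [hF, Equiv.funSplitAt_symm_apply, h]
  constructor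
  · intro hi
    refine ⟨fun a b hab => ?_, ?_⟩
    · have : F a.1 = F b.1 := by rw [hFne a.1 a.2, hFne b.1 b.2]; exact hab
      exact Subtype.ext (hi this)
    · rintro ⟨a, rfl⟩
      have : F a.1 = F v := by rw [hFne a.1 a.2, hFv]
      exact a.2 (hi this)
  · rintro ⟨hψ, hx⟩ a b hab
    by_cases ha : a = v <;> by_cases hb : b = v
    · rw [ha, hb]
    · subst ha; rw [hFv, hFne b hb] at hab; exact absurd ⟨⟨b, hb⟩, hab.symm⟩ hx
    · subst hb; rw [hFv, hFne a ha] at hab; exact absurd ⟨⟨a, ha⟩, hab⟩ hx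
    · rw [hFne a ha, hFne b hb] at hab
      exact congrArg Subtype.val (hψ hab)

lemma sum_univ_inst_irrel {X : Type} (i1 i2 : Fintype X) (f : X → ℝ) :
    @Finset.sum X ℝ _ (@Finset.univ X i1) f = @Finset.sum X ℝ _ (@Finset.univ X i2) f := by
  cases Subsingleton.elim i1 i2; rfl

lemma sum_inst_irrel' {X : Type} (i1 i2 : Fintype X) (f g : X → ℝ) (h : ∀ x, f x = g x) :
    @Finset.sum X ℝ _ (@Finset.univ X i1) f = @Finset.sum X ℝ _ (@Finset.univ X i2) g := by
  cases Subsingleton.elim i1 i2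
  exact Finset.sum_congr rfl fun x _ => h x


set_option maxHeartbeats 1000000 in
/-- exact identity for the removal of a hanging double edge. -/
theorem statement_11 (α : Diagram) (u v : α.V) (huv : u ≠ v) (hv : v ≠ α.root)
    (hdouble : α.edges.count s(u, v) = 2)
    (hdeg : ∀ e ∈ α.edges, v ∈ e → e = s(u, v))
    (hdeg2 : ∀ e ∈ α.edges2, v ∉ e)
    (N : ℕ) (A : Matrix (Fin N) (Fin N) ℝ) (hA : A.IsSymm) (i : Fin N) :
    Zv A α i = Zv A (rmHDE α u v huv hv) i -
        ((Fintype.card α.V - 1 : ℕ) : ℝ) / (N : ℝ) * Zv A (rmHDE α u v huv hv) i +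
        Zv A (relabelHDE α u v) i := by
  classical
  set β := rmHDE α u v huv hv with hβ
  set E₀ : Multiset (Sym2 α.V) := α.edges - Multiset.replicate 2 s(u, v) with hE₀
  have hrep : Multiset.replicate 2 s(u, v) ≤ α.edges :=
    Multiset.le_count_iff_replicate_le.1 hdouble.ge
  have hsplit : E₀ + Multiset.replicate 2 s(u, v) = α.edges := tsub_add_cancel_of_le hrep
  have hE₀le : E₀ ≤ α.edges := tsub_le_self
  have hE₀v : ∀ e ∈ E₀, v ∉ e := by
    intro e he hve
    have heq : e = s(u, v) := hdeg e (Multiset.mem_of_le hE₀le he) hve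
    have hc : Multiset.count s(u, v) E₀ = 0 := by
      rw [hE₀, Multiset.count_sub, hdouble, Multiset.count_replicate_self]
    rw [heq] at he
    exact (Multiset.count_eq_zero.mp hc) he
  set g : α.V → {w : α.V // w ≠ v} :=
    (fun w => if h : w = v then (⟨u, huv⟩ : {w : α.V // w ≠ v}) else ⟨w, h⟩) with hg
  -- Step 1: rewrite Zv A α i
  have hZ1 : Zv A α i = ∑ φ : α.V → Fin N,
      if Function.Injective φ ∧ φ α.root = i then
        sym2val A φ s(u, v) ^ 2 * s11PQ A α E₀ φ else 0 := by
    unfold Zv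
    refine Finset.sum_congr rfl fun φ _ => ?_
    split
    · rw [← hsplit, Multiset.map_add, Multiset.prod_add, Multiset.map_replicate,
        Multiset.prod_replicate, s11PQ]
      ring
    · rfl
  -- Step 2: rewrite Zv of the relabeled diagram
  have hZ2 : Zv A (relabelHDE α u v) i = ∑ φ : α.V → Fin N,
      if Function.Injective φ ∧ φ α.root = i then
        (sym2val A φ s(u, v) ^ 2 - 1 / (N : ℝ)) * s11PQ A α E₀ φ else 0 := by
    unfold Zv relabelHDE
    refine Finset.sum_congr rfl fun φ _ => ?_
    split
    · simp only [Multiset.map_add, Multiset.prod_add, Multiset.map_singleton,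
        Multiset.prod_singleton, s11PQ]
      ring
    · rfl
  -- Step 3: rewrite Zv of the reduced diagram
  have hroot' : α.root ≠ v := fun h => hv h.symm
  have hZβ : Zv A β i = ∑ ψ : β.V → Fin N,
      if Function.Injective ψ ∧ ψ ⟨α.root, hroot'⟩ = i then
        s11PQ A α E₀ (ψ ∘ g) else 0 := by
    unfold Zv
    refine Finset.sum_congr rfl fun ψ _ => ?_
    have h1 : (β.edges.map (sym2val A ψ)).prod = (E₀.map (sym2val A (ψ ∘ g))).prod := by
      show (((E₀).map (Sym2.map g)).map (sym2val A ψ)).prod = _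
      erw [Multiset.map_map]
      congr 1
      exact Multiset.map_congr rfl fun e _ => sym2val_map_s11 A g ψ e
    have h2 : (β.edges2.map fun e => sym2val A ψ e ^ 2 - 1 / (N : ℝ)).prod =
        (α.edges2.map fun e => sym2val A (ψ ∘ g) e ^ 2 - 1 / (N : ℝ)).prod := by
      show (((α.edges2).map (Sym2.map g)).map fun e => sym2val A ψ e ^ 2 - 1 / (N : ℝ)).prod = _
      erw [Multiset.map_map]
      congr 1
      refine Multiset.map_congr rfl fun e _ => ?_
      exact congrArg (fun t => t ^ 2 - 1 / (N : ℝ)) (sym2val_map_s11 A g ψ e)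
    have h3 : β.root = ⟨α.root, hroot'⟩ := rfl
    rw [h1, h2, h3, s11PQ]
  -- the key counting identity
  have key : (∑ φ : α.V → Fin N,
      if Function.Injective φ ∧ φ α.root = i then s11PQ A α E₀ φ else 0)
      = ((N - (Fintype.card α.V - 1) : ℕ) : ℝ) * Zv A β i := by
    rw [← Equiv.sum_comp (Equiv.funSplitAt v (Fin N)).symm
      (fun φ => if Function.Injective φ ∧ φ α.root = i then s11PQ A α E₀ φ else 0),
      Fintype.sum_prod_type, Finset.sum_comm]
    have hinner : ∀ ψ : {w : α.V // w ≠ v} → Fin N,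
        (∑ x : Fin N,
          if Function.Injective ((Equiv.funSplitAt v (Fin N)).symm (x, ψ)) ∧
              ((Equiv.funSplitAt v (Fin N)).symm (x, ψ)) α.root = i then
            s11PQ A α E₀ ((Equiv.funSplitAt v (Fin N)).symm (x, ψ)) else 0)
        = if Function.Injective ψ ∧ ψ ⟨α.root, hroot'⟩ = i then
            ((N - (Fintype.card α.V - 1) : ℕ) : ℝ) * s11PQ A α E₀ (ψ ∘ g) else 0 := by
      intro ψ
      have hext : ∀ x : Fin N, ∀ (w : α.V) (h : w ≠ v),
          ((Equiv.funSplitAt v (Fin N)).symm (x, ψ)) w = ψ ⟨w, h⟩ := fun x w h => by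
        simp [Equiv.funSplitAt_symm_apply, h]
      have hPQ : ∀ x : Fin N,
          s11PQ A α E₀ ((Equiv.funSplitAt v (Fin N)).symm (x, ψ)) = s11PQ A α E₀ (ψ ∘ g) := by
        intro x
        refine s11PQ_congr A hE₀v hdeg2 fun w hw => ?_
        rw [hext x w hw]
        simp only [hg, Function.comp_apply, dif_neg hw]
      have hroot : ∀ x : Fin N,
          ((Equiv.funSplitAt v (Fin N)).symm (x, ψ)) α.root = ψ ⟨α.root, hroot'⟩ :=
        fun x => hext x α.root hroot'
      by_cases hcond : Function.Injective ψ ∧ ψ ⟨α.root, hroot'⟩ = i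
      · rw [if_pos hcond]
        have hterm : ∀ x : Fin N,
            (if Function.Injective ((Equiv.funSplitAt v (Fin N)).symm (x, ψ)) ∧
                ((Equiv.funSplitAt v (Fin N)).symm (x, ψ)) α.root = i then
              s11PQ A α E₀ ((Equiv.funSplitAt v (Fin N)).symm (x, ψ)) else 0)
            = if x ∉ Set.range ψ then s11PQ A α E₀ (ψ ∘ g) else 0 := by
          intro x
          rw [hPQ x]
          congr 1
          rw [s11_inj_iff, hroot x]
          simp [hcond.1, hcond.2]
        rw [Finset.sum_congr rfl fun x _ => hterm x]
        rw [← Finset.sum_filter, Finset.sum_const]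
        have himg : Finset.univ.filter (fun x : Fin N => ¬ x ∈ Set.range ψ)
            = (Finset.univ.image ψ)ᶜ := by
          ext x; simp
        rw [himg, nsmul_eq_mul]
        congr 2
        rw [Finset.card_compl, Finset.card_image_of_injective _ hcond.1, Finset.card_univ,
          Fintype.card_fin]
        congr 1
        exact Fintype.card_subtype_compl _
      · rw [if_neg hcond]
        refine Finset.sum_eq_zero fun x _ => ?_
        rw [if_neg]
        rintro ⟨h1, h2⟩
        rw [s11_inj_iff] at h1
        exact hcond ⟨h1.1, (hroot x) ▸ h2⟩
    rw [Finset.sum_congr rfl fun ψ _ => hinner ψ, hZβ, Finset.mul_sum]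
    refine sum_inst_irrel' _ _ _ _ fun ψ => ?_
    by_cases hc : Function.Injective ψ ∧ ψ ⟨α.root, hroot'⟩ = i
    · rw [if_pos hc]; exact congrArg _ (if_pos hc).symm
    · rw [if_neg hc]; exact (mul_eq_zero_of_right _ (if_neg hc)).symm
  -- assemble
  have hdiff : Zv A α i - Zv A (relabelHDE α u v) i =
      (1 / (N : ℝ)) * (((N - (Fintype.card α.V - 1) : ℕ) : ℝ) * Zv A β i) := by
    rw [hZ1, hZ2, ← Finset.sum_sub_distrib, ← key, Finset.mul_sum]
    refine Finset.sum_congr rfl fun φ _ => ?_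
    split
    · ring
    · simp
  have hmain : (1 / (N : ℝ)) * (((N - (Fintype.card α.V - 1) : ℕ) : ℝ) * Zv A β i) =
      Zv A β i - ((Fintype.card α.V - 1 : ℕ) : ℝ) / (N : ℝ) * Zv A β i := by
    by_cases hz : Zv A β i = 0
    · rw [hz]; ring
    · have hψ : ∃ ψ : β.V → Fin N, Function.Injective ψ := by
        by_contra h
        push_neg at h
        apply hz
        unfold Zv
        exact Finset.sum_eq_zero fun ψ _ => if_neg fun hc => (h ψ) hc.1
      obtain ⟨ψ, hψ⟩ := hψ
      have hcardβ : Fintype.card β.V = Fintype.card α.V - 1 := by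
        have h1 : Fintype.card β.V = Fintype.card {w : α.V // w ≠ v} :=
          Fintype.card_congr (Equiv.refl _)
        rw [h1]
        exact Fintype.card_subtype_compl _
      have hle : Fintype.card α.V - 1 ≤ N := by
        have := Fintype.card_le_of_injective ψ hψ
        rwa [Fintype.card_fin, hcardβ] at this
      have hpos : 0 < Fintype.card β.V := Fintype.card_pos_iff.mpr ⟨⟨u, huv⟩⟩
      have hN : 0 < N := lt_of_lt_of_le (hcardβ ▸ hpos) hle
      have hcast : ((N - (Fintype.card α.V - 1) : ℕ) : ℝ)
          = (N : ℝ) - ((Fintype.card α.V - 1 : ℕ) : ℝ) := by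
        exact Nat.cast_sub hle
      rw [hcast]
      have hN' : (N : ℝ) ≠ 0 := Nat.cast_ne_zero.mpr hN.ne'
      field_simp
  rw [hmain] at hdiff
  linarith
end
end

section
/- Let α be a connected (possibly edge-labeled) Fourier diagram of size independent of n. Then Z_α (with coefficient a_n = 1) is either combinatorially negligible or of combinatorial order 1. Moreover, it is of combinatorial order 1 if and only if all of the following hold simultaneously: (i) every edge of α has multiplicity 1 or 2; (ii) α has no cycles (its underlying simple graph is a tree); (iii) the subgraph of multiplicity-1 edges, if nonempty, is connected and contains the root (equivalently, the multiplicity-2 edges form hanging trees); (iv) α has no self-loops and no 2-labeled edges. -/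
set_option linter.unusedVariables false

open scoped Classical BigOperators

noncomputable section

open MeasureTheory ProbabilityTheory Filter

/-! ### Helper lemmas for Statement 12 -/

section Statement12Helpers

open SimpleGraph

private lemma theta_one_zero : IsThetaHalf (fun _ => (1 : ℝ)) 0 := by
  refine ⟨1, 1, one_pos, one_pos, fun n hn => ?_⟩
  simp

private lemma theta_one_eq_zero {j : ℕ} (h : IsThetaHalf (fun _ => (1 : ℝ)) j) : j = 0 := by
  by_contra hj
  obtain ⟨c1, c2, hc1, hc2, hb⟩ := h
  set n : ℕ := ⌈c2 ^ 2⌉₊ + 1 with hn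
  have hn1 : 1 ≤ n := Nat.succ_le_succ (Nat.zero_le _)
  obtain ⟨-, hub⟩ := hb n hn1
  have h1 : (1:ℝ) ≤ (n:ℝ) := by exact_mod_cast hn1
  have hpos : (0:ℝ) < (n:ℝ) := by linarith
  have hj1 : (1:ℕ) ≤ j := Nat.one_le_iff_ne_zero.2 hj
  have hmono : (n:ℝ) ^ (-(j:ℝ)/2) ≤ (n:ℝ) ^ (-(1:ℝ)/2) := by
    apply Real.rpow_le_rpow_of_exponent_le h1
    have : (1:ℝ) ≤ (j:ℝ) := by exact_mod_cast hj1
    linarith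
  rw [abs_one] at hub
  have h2 : (1:ℝ) ≤ c2 * (n:ℝ) ^ (-(1:ℝ)/2) :=
    hub.trans (mul_le_mul_of_nonneg_left hmono hc2.le)
  have hrw : (n:ℝ) ^ (-(1:ℝ)/2) = ((n:ℝ) ^ ((1:ℝ)/2))⁻¹ := by
    rw [neg_div, Real.rpow_neg hpos.le]
  have hx : (0:ℝ) < (n:ℝ) ^ ((1:ℝ)/2) := Real.rpow_pos_of_pos hpos _
  rw [hrw] at h2
  have h4 := mul_le_mul_of_nonneg_right h2 hx.le
  rw [one_mul, mul_assoc, inv_mul_cancel₀ hx.ne', mul_one] at h4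
  have h5 : (n:ℝ) ≤ c2 ^ 2 := by
    have h6 : ((n:ℝ) ^ ((1:ℝ)/2)) ^ 2 ≤ c2 ^ 2 := pow_le_pow_left₀ hx.le h4 2
    rwa [← Real.rpow_natCast ((n:ℝ) ^ ((1:ℝ)/2)) 2, ← Real.rpow_mul hpos.le,
      (by norm_num : (1:ℝ)/2 * (2:ℕ) = 1), Real.rpow_one] at h6
  have h7 : c2 ^ 2 ≤ (⌈c2 ^ 2⌉₊ : ℝ) := Nat.le_ceil _
  have h8 : ((⌈c2 ^ 2⌉₊ : ℝ)) < (n : ℝ) := by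
    rw [hn]; push_cast; linarith
  linarith

variable {V : Type}

private lemma reach_mono_adj {G G' : SimpleGraph V}
    (h : ∀ a b : V, G.Adj a b → G'.Reachable a b) {a b : V} (hr : G.Reachable a b) :
    G'.Reachable a b := by
  obtain ⟨p⟩ := hr
  induction p with
  | nil => exact Reachable.refl _
  | cons h' q ih => exact (h _ _ h').trans ih

private lemma exists_parent {G : SimpleGraph V} (hc : G.Connected) (root : V) {v : V}
    (hv : v ≠ root) : ∃ u, G.Adj u v ∧ G.dist u root + 1 = G.dist v root := by
  obtain ⟨p, hp⟩ := (hc v root).exists_walk_length_eq_dist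
  obtain ⟨u, ha, q, rfl⟩ := SimpleGraph.Walk.exists_eq_cons_of_ne hv p
  refine ⟨u, ha.symm, ?_⟩
  have h1 : G.dist u root ≤ q.length := SimpleGraph.dist_le q
  have h2 : G.dist v root ≤ G.dist u root + 1 := by
    have h3 : G.dist v u ≤ 1 := by
      simpa using SimpleGraph.dist_le (SimpleGraph.Walk.cons ha SimpleGraph.Walk.nil)
    have h4 := hc.dist_triangle (u := v) (v := u) (w := root)
    omega
  have h5 : q.length + 1 = G.dist v root := by simpa using hp
  omega

private lemma connected_card_le [Fintype V] [DecidableEq V] {G : SimpleGraph V}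
    [Fintype G.edgeSet] (hc : G.Connected) : Fintype.card V ≤ G.edgeFinset.card + 1 := by
  classical
  haveI hne : Nonempty V := hc.nonempty
  obtain ⟨root⟩ := id hne
  have hex : ∀ v : V, ∃ u, v ≠ root → G.Adj u v ∧ G.dist u root + 1 = G.dist v root := by
    intro v
    by_cases hv : v = root
    · exact ⟨root, fun h => absurd hv h⟩
    · obtain ⟨u, h⟩ := exists_parent hc root hv
      exact ⟨u, fun _ => h⟩
  choose pd hpd using hex
  have hcard : (Finset.univ.erase root).card ≤ G.edgeFinset.card := by
    apply Finset.card_le_card_of_injOn (fun v => s(pd v, v))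
    · intro v hv
      have hv' := (Finset.mem_erase.1 hv).1
      exact SimpleGraph.mem_edgeFinset.2 ((G.mem_edgeSet).2 (hpd v hv').1)
    · intro v hv w hw h
      have hv' := (Finset.mem_erase.1 (Finset.mem_coe.1 hv)).1
      have hw' := (Finset.mem_erase.1 (Finset.mem_coe.1 hw)).1
      rcases Sym2.eq_iff.1 h with ⟨h1, h2⟩ | ⟨h1, h2⟩
      · exact h2
      · have d1 := (hpd v hv').2
        have d2 := (hpd w hw').2
        rw [h1] at d1
        rw [← h2] at d2
        omega
  have h1 : (Finset.univ.erase root).card = Fintype.card V - 1 := by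
    rw [Finset.card_erase_of_mem (Finset.mem_univ _), Finset.card_univ]
  have h2 : 0 < Fintype.card V := Fintype.card_pos
  omega

private lemma connected_del_edge {G : SimpleGraph V} (hc : G.Connected) {v w : V}
    (hr : (G \ SimpleGraph.fromEdgeSet {s(v,w)}).Reachable v w) :
    (G \ SimpleGraph.fromEdgeSet {s(v,w)}).Connected := by
  haveI hne : Nonempty V := hc.nonempty
  constructor
  intro a b
  refine reach_mono_adj ?_ (hc.preconnected a b)
  intro x y hxy
  by_cases hxy' : s(x,y) = s(v,w)
  · rcases Sym2.eq_iff.1 hxy' with ⟨rfl, rfl⟩ | ⟨rfl, rfl⟩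
    · exact hr
    · exact hr.symm
  · refine SimpleGraph.Adj.reachable ?_
    rw [SimpleGraph.sdiff_adj]
    refine ⟨hxy, ?_⟩
    rw [SimpleGraph.fromEdgeSet_adj]
    simp only [Set.mem_singleton_iff]
    tauto

private lemma acyclic_of_card [Fintype V] [DecidableEq V] {G : SimpleGraph V} [Fintype G.edgeSet]
    (hc : G.Connected) (hcard : G.edgeFinset.card + 1 = Fintype.card V) : G.IsAcyclic := by
  classical
  rw [SimpleGraph.isAcyclic_iff_forall_adj_isBridge]
  intro v w hadj
  by_contra hbr
  rw [SimpleGraph.isBridge_iff] at hbr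
  have hr : (G \ SimpleGraph.fromEdgeSet {s(v,w)}).Reachable v w := by
    by_contra hr
    exact hbr hr
  have hc' := connected_del_edge hc hr
  haveI : Fintype (G \ SimpleGraph.fromEdgeSet {s(v,w)}).edgeSet := Fintype.ofFinite _
  have hd : ¬ (s(v,w)).IsDiag := by
    rw [Sym2.mk_isDiag_iff]
    exact hadj.ne
  have hEF : (G \ SimpleGraph.fromEdgeSet {s(v,w)}).edgeFinset = G.edgeFinset.erase s(v,w) := by
    ext e
    simp only [SimpleGraph.mem_edgeFinset, Finset.mem_erase, SimpleGraph.edgeSet_sdiff,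
      SimpleGraph.edgeSet_fromEdgeSet, Set.mem_diff, Set.mem_singleton_iff, Set.mem_setOf_eq]
    constructor
    · rintro ⟨he, hne⟩
      exact ⟨fun heq => hne ⟨heq, heq ▸ hd⟩, he⟩
    · rintro ⟨hne, he⟩
      exact ⟨he, fun h => hne h.1⟩
  have h1 := connected_card_le hc'
  rw [hEF] at h1
  have h2 : s(v,w) ∈ G.edgeFinset := SimpleGraph.mem_edgeFinset.2 ((G.mem_edgeSet).2 hadj)
  have h3 := Finset.card_erase_of_mem h2
  have h4 : 0 < G.edgeFinset.card := Finset.card_pos.2 ⟨_, h2⟩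
  omega

private lemma firstEdge_mem {G : SimpleGraph V} {u w : V} (p : G.Walk u w) (hp : ¬ p.Nil) :
    s(u, p.getVert 1) ∈ p.edges := by
  cases p with
  | nil => exact absurd SimpleGraph.Walk.Nil.nil hp
  | cons h q => simp [SimpleGraph.Walk.getVert_cons_succ]

end Statement12Helpers
section Statement12Helpers2

open SimpleGraph

private lemma sum_eq_term_eq {ι : Type} {s : Finset ι} {f g : ι → ℕ}
    (hle : ∀ i ∈ s, f i ≤ g i) (heq : ∑ i ∈ s, f i = ∑ i ∈ s, g i) : ∀ i ∈ s, f i = g i := by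
  intro i hi
  by_contra hne
  have hlt : f i < g i := lt_of_le_of_ne (hle i hi) hne
  have := Finset.sum_lt_sum hle ⟨i, hi, hlt⟩
  omega

private lemma tree_parent_surj {V : Type} [DecidableEq V] {G : SimpleGraph V} (hG : G.IsTree)
    (root : V) (Q : ∀ v : V, G.Walk v root) (hQp : ∀ v, (Q v).IsPath)
    (hQu : ∀ v (q : G.Walk v root), q.IsPath → q = Q v)
    {x y : V} (hadj : G.Adj x y) (hle : (Q x).length ≤ (Q y).length) :
    y ≠ root ∧ s(y, (Q y).getVert 1) = s(x, y) := by
  have hy : y ≠ root := by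
    rintro rfl
    have hQy : Q y = SimpleGraph.Walk.nil := (hQu y SimpleGraph.Walk.nil SimpleGraph.Walk.IsPath.nil).symm
    have hQx : (SimpleGraph.Walk.cons hadj SimpleGraph.Walk.nil : G.Walk x y) = Q x := by
      apply hQu
      rw [SimpleGraph.Walk.cons_isPath_iff]
      exact ⟨SimpleGraph.Walk.IsPath.nil, by simp [hadj.ne]⟩
    have h1 : (Q x).length = 1 := by rw [← hQx]; simp
    rw [hQy] at hle
    simp only [SimpleGraph.Walk.length_nil] at hle
    omega
  have hynsupp : y ∉ (Q x).support := by
    intro hy'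
    have h1 : (Q x).takeUntil y hy' = SimpleGraph.Walk.cons hadj SimpleGraph.Walk.nil := by
      refine (hG.existsUnique_path x y).unique ((hQp x).takeUntil hy') ?_
      rw [SimpleGraph.Walk.cons_isPath_iff]
      exact ⟨SimpleGraph.Walk.IsPath.nil, by simp [hadj.ne]⟩
    have h3 : (Q x).dropUntil y hy' = Q y := hQu y _ ((hQp x).dropUntil hy')
    have h4 := congrArg SimpleGraph.Walk.length (SimpleGraph.Walk.take_spec (Q x) hy')
    rw [SimpleGraph.Walk.length_append, h1, h3] at h4
    simp at h4
    omega
  have hQyeq : SimpleGraph.Walk.cons hadj.symm (Q x) = Q y := by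
    apply hQu
    rw [SimpleGraph.Walk.cons_isPath_iff]
    exact ⟨hQp x, hynsupp⟩
  refine ⟨hy, ?_⟩
  have hgv : (SimpleGraph.Walk.cons hadj.symm (Q x)).getVert 1 = x := by
    simp [SimpleGraph.Walk.getVert_cons_succ]
  rw [← hQyeq, hgv]
  exact Sym2.eq_swap

end Statement12Helpers2
/-- classification of connected diagrams of combinatorial order 1. -/
theorem statement_12 (α : Diagram) (hconn : α.Conn) (hni : α.NoIsolated) :
    (NegligibleTerm (fun _ => (1 : ℝ)) α ∨ Order1Term (fun _ => (1 : ℝ)) α) ∧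
    (Order1Term (fun _ => (1 : ℝ)) α ↔
      ((∀ e ∈ α.allE, α.allE.count e ≤ 2) ∧
        α.graph.IsAcyclic ∧
        ((∀ e ∈ α.allE, α.allE.count e ≠ 1) ∨
          ((∃ e ∈ α.allE, α.allE.count e = 1 ∧ α.root ∈ e) ∧
            ∀ v w : α.V, (∃ e ∈ α.allE, α.allE.count e = 1 ∧ v ∈ e) →
              (∃ e ∈ α.allE, α.allE.count e = 1 ∧ w ∈ e) →
              (SimpleGraph.fromEdgeSet {e | e ∈ α.allE ∧ α.allE.count e = 1}).Reachable v w)) ∧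
        ((∀ e ∈ α.allE, ¬ e.IsDiag) ∧ α.edges2 = 0))) := by
  classical
  have hconn' : α.graph.Connected := hconn
  haveI : Nonempty α.V := hconn'.nonempty
  haveI : Fintype α.graph.edgeSet := Fintype.ofFinite _
  have hV1 : 1 ≤ Fintype.card α.V := Fintype.card_pos
  set S : Finset (Sym2 α.V) := α.allE.toFinset with hS
  set R : Finset α.V := Finset.univ.erase α.root with hRdef
  have hRcard : R.card = Fintype.card α.V - 1 := by
    rw [hRdef, Finset.card_erase_of_mem (Finset.mem_univ _), Finset.card_univ]
  have hmemR : ∀ v : α.V, v ≠ α.root → v ∈ R := fun v hv =>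
    Finset.mem_erase.2 ⟨hv, Finset.mem_univ _⟩
  have hmemR' : ∀ v ∈ R, v ≠ α.root := fun v hv => (Finset.mem_erase.1 hv).1
  have hImem : ∀ v : α.V, v ∈ α.I ↔
      (v ≠ α.root ∧ ∀ e ∈ α.allE, v ∈ e → (2 ≤ α.allE.count e ∨ e.IsDiag)) := fun v => by
    rw [Diagram.I, Finset.mem_filter]
    simp only [Finset.mem_univ, true_and]
  have hIR : R.filter (fun v => v ∈ α.I) = α.I := by
    ext v
    simp only [Finset.mem_filter]
    constructor
    · rintro ⟨-, h⟩; exact h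
    · intro h
      exact ⟨hmemR v ((hImem v).1 h).1, h⟩
  have hcount_sum : ∀ m : Multiset (Sym2 α.V), (∀ e, e ∈ m → e ∈ α.allE) →
      ∑ e ∈ S, m.count e = Multiset.card m := by
    intro m hm
    rw [← Multiset.toFinset_sum_count_eq m]
    refine (Finset.sum_subset ?_ ?_).symm
    · intro e he
      rw [hS, Multiset.mem_toFinset]
      exact hm e (Multiset.mem_toFinset.1 he)
    · intro e _ he
      rw [Multiset.count_eq_zero]
      rw [Multiset.mem_toFinset] at he
      exact he
  have h_nE : α.nE = ∑ e ∈ S, (α.edges.count e + 2 * α.edges2.count e) := by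
    have h1 := hcount_sum α.edges (fun e he => Multiset.mem_add.2 (Or.inl he))
    have h2 := hcount_sum α.edges2 (fun e he => Multiset.mem_add.2 (Or.inr he))
    rw [Finset.sum_add_distrib, ← Finset.mul_sum, h1, h2]
    rfl
  have hadj_iff : ∀ a b : α.V, α.graph.Adj a b ↔ (s(a,b) ∈ α.allE ∧ a ≠ b) := by
    intro a b
    constructor
    · intro h
      exact (SimpleGraph.fromEdgeSet_adj _).1 h
    · intro h
      exact (SimpleGraph.fromEdgeSet_adj _).2 h
  -- parent machinery via distance
  have hex : ∀ v : α.V, ∃ u, v ≠ α.root →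
      α.graph.Adj u v ∧ α.graph.dist u α.root + 1 = α.graph.dist v α.root := by
    intro v
    by_cases hv : v = α.root
    · exact ⟨α.root, fun h => absurd hv h⟩
    · obtain ⟨u, h⟩ := exists_parent hconn' α.root hv
      exact ⟨u, fun _ => h⟩
  choose pd hpd using hex
  have hpe_adj : ∀ v ∈ R, α.graph.Adj (pd v) v := fun v hv => (hpd v (hmemR' v hv)).1
  have hpe_mem : ∀ v ∈ R, s(pd v, v) ∈ α.allE := fun v hv => ((hadj_iff _ _).1 (hpe_adj v hv)).1
  have hpe_ne : ∀ v ∈ R, pd v ≠ v := fun v hv => (hpe_adj v hv).ne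
  have hpe_ndiag : ∀ v ∈ R, ¬ (s(pd v, v)).IsDiag := fun v hv => by
    rw [Sym2.mk_isDiag_iff]; exact hpe_ne v hv
  have hpe_inj : ∀ v ∈ R, ∀ w ∈ R, s(pd v, v) = s(pd w, w) → v = w := by
    intro v hv w hw h
    rcases Sym2.eq_iff.1 h with ⟨h1, h2⟩ | ⟨h1, h2⟩
    · exact h2
    · have d1 := (hpd v (hmemR' v hv)).2
      have d2 := (hpd w (hmemR' w hw)).2
      rw [h1] at d1
      rw [← h2] at d2
      omega
  have hcnt_t : ∀ v ∈ R, (if v ∈ α.I then 2 else 1) ≤ α.allE.count (s(pd v, v)) := by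
    intro v hv
    by_cases hvI : v ∈ α.I
    · rw [if_pos hvI]
      rcases ((hImem v).1 hvI).2 _ (hpe_mem v hv) (Sym2.mem_mk_right _ _) with h | h
      · exact h
      · exact absurd h (hpe_ndiag v hv)
    · rw [if_neg hvI]
      exact Multiset.one_le_count_iff_mem.2 (hpe_mem v hv)
  have sum1 : ∑ v ∈ R, (if v ∈ α.I then 2 else 1) = (Fintype.card α.V - 1) + α.I.card := by
    have hcongr : ∀ v ∈ R, (if v ∈ α.I then 2 else 1) = 1 + (if v ∈ α.I then 1 else 0) := by
      intro v _; split <;> rfl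
    rw [Finset.sum_congr rfl hcongr, Finset.sum_add_distrib, Finset.sum_const, smul_eq_mul,
      mul_one, Finset.sum_boole, hIR, hRcard]
    simp
  set im : Finset (Sym2 α.V) := R.image (fun v => s(pd v, v)) with him_def
  have sum3 : ∑ e ∈ im, α.allE.count e = ∑ v ∈ R, α.allE.count (s(pd v, v)) := by
    rw [him_def]
    exact Finset.sum_image (fun v hv w hw h => hpe_inj v hv w hw h)
  set Snd : Finset (Sym2 α.V) := S.filter (fun e => ¬ e.IsDiag) with hSnd_def
  have him_sub : im ⊆ Snd := by
    intro e he
    rw [him_def] at he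
    obtain ⟨v, hv, rfl⟩ := Finset.mem_image.1 he
    rw [hSnd_def, Finset.mem_filter]
    exact ⟨by rw [hS]; exact Multiset.mem_toFinset.2 (hpe_mem v hv), hpe_ndiag v hv⟩
  have sum4 : ∑ e ∈ im, α.allE.count e ≤ ∑ e ∈ Snd, α.allE.count e :=
    Finset.sum_le_sum_of_subset him_sub
  have sum5 : ∑ e ∈ Snd, α.allE.count e ≤ ∑ e ∈ S, α.allE.count e := by
    rw [hSnd_def]
    exact Finset.sum_le_sum_of_subset (Finset.filter_subset _ _)
  have hterm : ∀ e ∈ S, α.allE.count e ≤ α.edges.count e + 2 * α.edges2.count e := by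
    intro e _
    have h1 : α.allE.count e = α.edges.count e + α.edges2.count e := by
      rw [Diagram.allE, Multiset.count_add]
    omega
  have sum6 : ∑ e ∈ S, α.allE.count e ≤ ∑ e ∈ S, (α.edges.count e + 2 * α.edges2.count e) :=
    Finset.sum_le_sum hterm
  have sum2 : ∑ v ∈ R, (if v ∈ α.I then 2 else 1) ≤ ∑ v ∈ R, α.allE.count (s(pd v, v)) :=
    Finset.sum_le_sum hcnt_t
  have main_le : (Fintype.card α.V - 1) + α.I.card ≤ α.nE := by
    rw [h_nE]
    omega
  have main_eq : α.nE = (Fintype.card α.V - 1) + α.I.card →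
      ((∀ e ∈ α.allE, α.allE.count e ≤ 2) ∧
        α.graph.IsAcyclic ∧
        ((∀ e ∈ α.allE, α.allE.count e ≠ 1) ∨
          ((∃ e ∈ α.allE, α.allE.count e = 1 ∧ α.root ∈ e) ∧
            ∀ v w : α.V, (∃ e ∈ α.allE, α.allE.count e = 1 ∧ v ∈ e) →
              (∃ e ∈ α.allE, α.allE.count e = 1 ∧ w ∈ e) →
              (SimpleGraph.fromEdgeSet {e | e ∈ α.allE ∧ α.allE.count e = 1}).Reachable v w)) ∧
        ((∀ e ∈ α.allE, ¬ e.IsDiag) ∧ α.edges2 = 0)) := by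
    intro heq
    have e_top : ∑ e ∈ S, α.allE.count e = ∑ e ∈ S, (α.edges.count e + 2 * α.edges2.count e) := by
      omega
    have e_Snd : ∑ e ∈ Snd, α.allE.count e = ∑ e ∈ S, α.allE.count e := by omega
    have e_im : ∑ e ∈ im, α.allE.count e = ∑ e ∈ Snd, α.allE.count e := by omega
    have e_t : ∑ v ∈ R, (if v ∈ α.I then 2 else 1) = ∑ v ∈ R, α.allE.count (s(pd v, v)) := by
      omega
    have Ecw := sum_eq_term_eq hterm e_top
    have hedges2 : α.edges2 = 0 := by
      by_contra h0
      obtain ⟨x, hx⟩ := Multiset.exists_mem_of_ne_zero h0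
      have hxA : x ∈ α.allE := Multiset.mem_add.2 (Or.inr hx)
      have hxS : x ∈ S := by rw [hS]; exact Multiset.mem_toFinset.2 hxA
      have h1 := Ecw x hxS
      have h2 : α.allE.count x = α.edges.count x + α.edges2.count x := by
        rw [Diagram.allE, Multiset.count_add]
      have h3 : 1 ≤ α.edges2.count x := Multiset.one_le_count_iff_mem.2 hx
      omega
    have Ediag : ∀ e ∈ α.allE, ¬ e.IsDiag := by
      intro e he hdiag
      have hsplit := Finset.sum_filter_add_sum_filter_not S (fun e => ¬ e.IsDiag)
        (fun e => α.allE.count e)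
      rw [← hSnd_def] at hsplit
      have hz : ∑ e ∈ S.filter (fun e => ¬¬ e.IsDiag), α.allE.count e = 0 := by omega
      have heS : e ∈ S.filter (fun e => ¬¬ e.IsDiag) := Finset.mem_filter.2
        ⟨by rw [hS]; exact Multiset.mem_toFinset.2 he, not_not_intro hdiag⟩
      have h0 := Finset.sum_eq_zero_iff.1 hz e heS
      have h1 : 1 ≤ α.allE.count e := Multiset.one_le_count_iff_mem.2 he
      omega
    have hSSnd : S = Snd := by
      rw [hSnd_def]
      ext e
      rw [Finset.mem_filter]
      constructor
      · intro he
        refine ⟨he, Ediag e ?_⟩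
        rw [hS] at he
        exact Multiset.mem_toFinset.1 he
      · exact fun h => h.1
    have hSnd_im : Snd ⊆ im := by
      have hsd : ∑ e ∈ Snd \ im, α.allE.count e + ∑ e ∈ im, α.allE.count e
          = ∑ e ∈ Snd, α.allE.count e := Finset.sum_sdiff him_sub
      have hz : ∑ e ∈ Snd \ im, α.allE.count e = 0 := by omega
      intro e he
      by_contra hni2
      have hmem : e ∈ Snd \ im := Finset.mem_sdiff.2 ⟨he, hni2⟩
      have h0 := Finset.sum_eq_zero_iff.1 hz e hmem
      have he' : e ∈ α.allE := by
        rw [hSnd_def] at he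
        have h2 := (Finset.mem_filter.1 he).1
        rw [hS] at h2
        exact Multiset.mem_toFinset.1 h2
      have h1 : 1 ≤ α.allE.count e := Multiset.one_le_count_iff_mem.2 he'
      omega
    have Ecnt_pe := sum_eq_term_eq hcnt_t e_t
    have Hcle : ∀ e ∈ α.allE, α.allE.count e ≤ 2 := by
      intro e he
      have heS : e ∈ S := by rw [hS]; exact Multiset.mem_toFinset.2 he
      have heim : e ∈ im := hSnd_im (hSSnd ▸ heS)
      rw [him_def] at heim
      obtain ⟨v, hv, rfl⟩ := Finset.mem_image.1 heim
      have h1 := Ecnt_pe v hv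
      split at h1 <;> omega
    have hEF : α.graph.edgeFinset = Snd := by
      ext e
      rw [SimpleGraph.mem_edgeFinset]
      have hes : α.graph.edgeSet = {e : Sym2 α.V | e ∈ α.allE} \ {e | e.IsDiag} := by
        rw [Diagram.graph, SimpleGraph.edgeSet_fromEdgeSet]; rfl
      rw [hSnd_def, Finset.mem_filter, hes]
      constructor
      · rintro ⟨h1, h2⟩
        exact ⟨by rw [hS]; exact Multiset.mem_toFinset.2 h1, h2⟩
      · rintro ⟨h1, h2⟩
        refine ⟨?_, h2⟩
        rw [hS] at h1
        exact Multiset.mem_toFinset.1 h1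
    have hcard_e : α.graph.edgeFinset.card + 1 = Fintype.card α.V := by
      have h1 : Snd = im := Finset.Subset.antisymm hSnd_im him_sub
      have h2 : im.card = R.card := by
        rw [him_def]
        exact Finset.card_image_of_injOn (fun v hv w hw h =>
          hpe_inj v (Finset.mem_coe.1 hv) w (Finset.mem_coe.1 hw) h)
      rw [hEF, h1, h2, hRcard]
      omega
    have hacyc := acyclic_of_card hconn' hcard_e
    have reach1 : ∀ v : α.V, (∃ e ∈ α.allE, α.allE.count e = 1 ∧ v ∈ e) →
        (SimpleGraph.fromEdgeSet {e | e ∈ α.allE ∧ α.allE.count e = 1}).Reachable α.root v := by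
      suffices H : ∀ n, ∀ v : α.V, α.graph.dist v α.root = n →
          (∃ e ∈ α.allE, α.allE.count e = 1 ∧ v ∈ e) →
          (SimpleGraph.fromEdgeSet {e | e ∈ α.allE ∧ α.allE.count e = 1}).Reachable α.root v by
        exact fun v hv => H _ v rfl hv
      intro n
      induction n using Nat.strong_induction_on with
      | _ n IH =>
        intro v hdist htouch
        by_cases hv : v = α.root
        · subst hv
          exact SimpleGraph.Reachable.refl _
        · have hvR : v ∈ R := hmemR v hv
          have hvnI : v ∉ α.I := by
            intro hvI
            obtain ⟨e, he, hce, hve⟩ := htouch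
            rcases ((hImem v).1 hvI).2 e he hve with h2 | hd
            · omega
            · exact Ediag e he hd
          have hc1 : α.allE.count (s(pd v, v)) = 1 := by
            have h1 := Ecnt_pe v hvR
            rw [if_neg hvnI] at h1
            omega
          have hadj1 : (SimpleGraph.fromEdgeSet
              {e | e ∈ α.allE ∧ α.allE.count e = 1}).Adj (pd v) v :=
            (SimpleGraph.fromEdgeSet_adj _).2 ⟨⟨hpe_mem v hvR, hc1⟩, hpe_ne v hvR⟩
          have hdlt : α.graph.dist (pd v) α.root < n := by
            have h2 := (hpd v hv).2
            omega
          exact (IH _ hdlt (pd v) rfl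
            ⟨s(pd v, v), hpe_mem v hvR, hc1, Sym2.mem_mk_left _ _⟩).trans hadj1.reachable
    refine ⟨Hcle, hacyc, ?_, Ediag, hedges2⟩
    by_cases hall1 : ∀ e ∈ α.allE, α.allE.count e ≠ 1
    · exact Or.inl hall1
    · push_neg at hall1
      obtain ⟨e0, he0, hc0⟩ := hall1
      have hroot : ∃ e ∈ α.allE, α.allE.count e = 1 ∧ α.root ∈ e := by
        obtain ⟨x, hx⟩ : ∃ x, x ∈ e0 := ⟨e0.out.1, Sym2.out_fst_mem e0⟩
        have hrx := reach1 x ⟨e0, he0, hc0, hx⟩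
        by_cases hxr : x = α.root
        · exact ⟨e0, he0, hc0, hxr ▸ hx⟩
        · obtain ⟨p⟩ := hrx
          obtain ⟨u, hadj, q, -⟩ := SimpleGraph.Walk.exists_eq_cons_of_ne
            (fun h => hxr h.symm) p
          obtain ⟨⟨hmem, hcnt⟩, -⟩ := (SimpleGraph.fromEdgeSet_adj _).1 hadj
          exact ⟨s(α.root, u), hmem, hcnt, Sym2.mem_mk_left _ _⟩
      refine Or.inr ⟨hroot, fun v w hv hw => ?_⟩
      exact (reach1 v hv).symm.trans (reach1 w hw)
  have main_ge :
      ((∀ e ∈ α.allE, α.allE.count e ≤ 2) ∧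
        α.graph.IsAcyclic ∧
        ((∀ e ∈ α.allE, α.allE.count e ≠ 1) ∨
          ((∃ e ∈ α.allE, α.allE.count e = 1 ∧ α.root ∈ e) ∧
            ∀ v w : α.V, (∃ e ∈ α.allE, α.allE.count e = 1 ∧ v ∈ e) →
              (∃ e ∈ α.allE, α.allE.count e = 1 ∧ w ∈ e) →
              (SimpleGraph.fromEdgeSet {e | e ∈ α.allE ∧ α.allE.count e = 1}).Reachable v w)) ∧
        ((∀ e ∈ α.allE, ¬ e.IsDiag) ∧ α.edges2 = 0)) →
      α.nE = (Fintype.card α.V - 1) + α.I.card := by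
    rintro ⟨Hcle, hacyc, hdisj, Ediag, hedges2⟩
    have hTree : α.graph.IsTree := ⟨hconn', hacyc⟩
    have hes : α.graph.edgeSet = {e : Sym2 α.V | e ∈ α.allE} \ {e | e.IsDiag} := by
      rw [Diagram.graph, SimpleGraph.edgeSet_fromEdgeSet]; rfl
    have hexQ : ∀ v : α.V, ∃ p : α.graph.Walk v α.root, p.IsPath ∧
        ∀ q : α.graph.Walk v α.root, q.IsPath → q = p := by
      intro v
      obtain ⟨p, h1, h2⟩ := hTree.existsUnique_path v α.root
      exact ⟨p, h1, h2⟩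
    choose Q hQp hQu using hexQ
    have hQnn : ∀ v : α.V, v ≠ α.root → ¬ (Q v).Nil := fun v hv =>
      SimpleGraph.Walk.not_nil_of_ne hv
    have hQadj : ∀ v : α.V, v ≠ α.root → α.graph.Adj v ((Q v).getVert 1) :=
      fun v hv => SimpleGraph.Walk.adj_snd (hQnn v hv)
    have hpE_mem_edges : ∀ v : α.V, v ≠ α.root → s(v, (Q v).getVert 1) ∈ (Q v).edges :=
      fun v hv => firstEdge_mem (Q v) (hQnn v hv)
    have hpE_edgeSet : ∀ v ∈ R, s(v, (Q v).getVert 1) ∈ α.graph.edgeSet :=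
      fun v hv => (α.graph.mem_edgeSet).2 (hQadj v (hmemR' v hv))
    have key_len : ∀ v w : α.V, v ≠ α.root → (Q w).getVert 1 = v →
        (Q v).length + 1 = (Q w).length := by
      intro v w hv h1
      have hw : w ≠ α.root := by
        rintro rfl
        have hnil : Q α.root = SimpleGraph.Walk.nil :=
          (hQu α.root SimpleGraph.Walk.nil SimpleGraph.Walk.IsPath.nil).symm
        rw [hnil, SimpleGraph.Walk.getVert_of_length_le _ (by simp)] at h1
        exact hv h1.symm
      have htail := (hQp w).tail
      have hcopy : ((Q w).tail.copy h1 rfl).IsPath :=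
        (SimpleGraph.Walk.isPath_copy _ h1 rfl).2 htail
      have heqq := hQu v ((Q w).tail.copy h1 rfl) hcopy
      have hlen := congrArg SimpleGraph.Walk.length heqq
      rw [SimpleGraph.Walk.length_copy] at hlen
      have h2 := SimpleGraph.Walk.length_tail_add_one (hQnn w hw)
      omega
    have hpE_inj : ∀ v ∈ R, ∀ w ∈ R, s(v, (Q v).getVert 1) = s(w, (Q w).getVert 1) → v = w := by
      intro v hv w hw h
      rcases Sym2.eq_iff.1 h with ⟨h1, h2⟩ | ⟨h1, h2⟩
      · exact h1
      · have l1 := key_len v w (hmemR' v hv) h1.symm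
        have l2 := key_len w v (hmemR' w hw) h2
        omega
    have hpE_surj : ∀ e ∈ α.graph.edgeFinset, ∃ v, ∃ hv : v ∈ R, s(v, (Q v).getVert 1) = e := by
      intro e he
      rw [SimpleGraph.mem_edgeFinset] at he
      induction e using Sym2.ind with
      | _ x y =>
        have hadj : α.graph.Adj x y := (α.graph.mem_edgeSet).1 he
        rcases le_total ((Q x).length) ((Q y).length) with hle | hle
        · obtain ⟨hy, hedge⟩ := tree_parent_surj hTree α.root Q hQp hQu hadj hle
          exact ⟨y, hmemR y hy, hedge⟩
        · obtain ⟨hy, hedge⟩ := tree_parent_surj hTree α.root Q hQp hQu hadj.symm hle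
          refine ⟨x, hmemR x hy, ?_⟩
          rw [hedge]
          exact Sym2.eq_swap
    have hval : ∀ v ∈ R, (if v ∈ α.I then 2 else 1 : ℕ)
        = α.allE.count (s(v, (Q v).getVert 1)) := by
      intro v hv
      have hv' := hmemR' v hv
      have hmemE : s(v, (Q v).getVert 1) ∈ α.allE ∧ ¬ (s(v, (Q v).getVert 1)).IsDiag := by
        have h1 := hpE_edgeSet v hv
        rw [hes] at h1
        exact ⟨h1.1, h1.2⟩
      by_cases hvI : v ∈ α.I
      · rw [if_pos hvI]
        rcases ((hImem v).1 hvI).2 _ hmemE.1 (Sym2.mem_mk_left _ _) with h2 | hd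
        · have h3 := Hcle _ hmemE.1
          omega
        · exact absurd hd hmemE.2
      · rw [if_neg hvI]
        have htouch : ∃ e ∈ α.allE, α.allE.count e = 1 ∧ v ∈ e := by
          by_contra hnt
          push_neg at hnt
          apply hvI
          refine (hImem v).2 ⟨hv', fun e he hve => Or.inl ?_⟩
          have h1 : 1 ≤ α.allE.count e := Multiset.one_le_count_iff_mem.2 he
          by_cases hc : α.allE.count e = 1
          · exact absurd hve (hnt e he hc)
          · omega
        rcases hdisj with hall | ⟨hrootedge, hreach⟩
        · obtain ⟨e, he, hc, hve⟩ := htouch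
          exact absurd hc (hall e he)
        · have hr : (SimpleGraph.fromEdgeSet
              {e | e ∈ α.allE ∧ α.allE.count e = 1}).Reachable v α.root := by
            obtain ⟨er, her, hcr, hrm⟩ := hrootedge
            obtain ⟨e1, he1, hc1, hv1⟩ := htouch
            exact hreach v α.root ⟨e1, he1, hc1, hv1⟩ ⟨er, her, hcr, hrm⟩
          obtain ⟨w0⟩ := hr
          have hsub : ∀ e ∈ (w0.toPath.val).edges, e ∈ α.graph.edgeSet := by
            intro e hme
            have h1 := w0.toPath.val.edges_subset_edgeSet hme
            rw [SimpleGraph.edgeSet_fromEdgeSet] at h1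
            rw [hes]
            exact ⟨h1.1.1, h1.2⟩
          have hpath2 : (w0.toPath.val.transfer α.graph hsub).IsPath :=
            SimpleGraph.Walk.IsPath.transfer hsub w0.toPath.2
          have heq2 : w0.toPath.val.transfer α.graph hsub = Q v := hQu v _ hpath2
          have hedges_eq : (Q v).edges = w0.toPath.val.edges := by
            rw [← heq2, SimpleGraph.Walk.edges_transfer]
          have hmm : s(v, (Q v).getVert 1) ∈ w0.toPath.val.edges := by
            have h1 := hpE_mem_edges v hv'
            rw [hedges_eq] at h1
            exact h1
          have h2 := w0.toPath.val.edges_subset_edgeSet hmm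
          rw [SimpleGraph.edgeSet_fromEdgeSet] at h2
          exact h2.1.2.symm
    have hsum_bij : ∑ v ∈ R, (if v ∈ α.I then 2 else 1 : ℕ)
        = ∑ e ∈ α.graph.edgeFinset, α.allE.count e :=
      Finset.sum_bij (fun v _ => s(v, (Q v).getVert 1))
        (fun v hv => SimpleGraph.mem_edgeFinset.2 (hpE_edgeSet v hv))
        (fun v hv w hw h => hpE_inj v hv w hw h)
        hpE_surj
        (fun v hv => hval v hv)
    have hEF : α.graph.edgeFinset = S := by
      ext e
      rw [SimpleGraph.mem_edgeFinset]
      rw [hes]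
      constructor
      · rintro ⟨h1, -⟩
        rw [hS]
        exact Multiset.mem_toFinset.2 h1
      · intro h1
        rw [hS] at h1
        have h2 := Multiset.mem_toFinset.1 h1
        exact ⟨h2, Ediag e h2⟩
    have hcnt_eq : ∀ e : Sym2 α.V, α.allE.count e = α.edges.count e + 2 * α.edges2.count e := by
      intro e
      have h0 : α.edges2.count e = 0 := by rw [hedges2]; simp
      have h1 : α.allE.count e = α.edges.count e + α.edges2.count e := by
        rw [Diagram.allE, Multiset.count_add]
      omega
    rw [h_nE]
    calc ∑ e ∈ S, (α.edges.count e + 2 * α.edges2.count e)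
        = ∑ e ∈ S, α.allE.count e := Finset.sum_congr rfl (fun e _ => (hcnt_eq e).symm)
      _ = ∑ e ∈ α.graph.edgeFinset, α.allE.count e := by rw [hEF]
      _ = ∑ v ∈ R, (if v ∈ α.I then 2 else 1 : ℕ) := hsum_bij.symm
      _ = (Fintype.card α.V - 1) + α.I.card := sum1
  -- final assembly
  have hDval : α.Dval = (Fintype.card α.V : ℤ) - 1 - (α.nE : ℤ) + (α.I.card : ℤ) := rfl
  have hOrd : Order1Term (fun _ => (1:ℝ)) α ↔ α.nE = (Fintype.card α.V - 1) + α.I.card := by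
    constructor
    · rintro ⟨j, hj, hje⟩
      have hj0 := theta_one_eq_zero hj
      subst hj0
      rw [hDval] at hje
      push_cast at hje
      omega
    · intro h
      refine ⟨0, theta_one_zero, ?_⟩
      rw [hDval]
      push_cast
      omega
  have hNeg : NegligibleTerm (fun _ => (1:ℝ)) α ↔ α.Dval ≤ -1 := by
    constructor
    · rintro (h | ⟨j, hj, hje⟩)
      · exact absurd (h 0) one_ne_zero
      · have hj0 := theta_one_eq_zero hj
        subst hj0
        push_cast at hje
        omega
    · intro h
      refine Or.inr ⟨0, theta_one_zero, ?_⟩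
      push_cast
      omega
  constructor
  · by_cases h0 : α.nE = (Fintype.card α.V - 1) + α.I.card
    · exact Or.inr (hOrd.2 h0)
    · refine Or.inl (hNeg.2 ?_)
      rw [hDval]
      omega
  · rw [hOrd]
    exact ⟨main_eq, main_ge⟩
end
end
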